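/- arXiv:1711.09284 — 12 statements merged into one kernel-verified Lean document; each statement's English description precedes it below -/
import Mathlib

section
/- Let ξ : [0,ℓ) → X be a self-contracted curve in a metric space. If ξ(t₁), ξ(t₂) ∈ B(x,r) for some t₁ < t₂, then ξ(t) ∈ B(x,3r) for all t ∈ (t₁,t₂). -/
/-- If a self-contracted curve visits the open ball `B(x,r)` at times `t₁ < t₂`, then
it stays in `B(x,3r)` for all `t ∈ (t₁, t₂)`. -/
theorem selfContracted_mem_ball_three
    {X : Type*} [MetricSpace X] {ℓ : ℝ} (ξ : ℝ → X)
    (hsc : ∀ t₁ t₂ t₃ : ℝ, 0 ≤ t₁ → t₁ ≤ t₂ → t₂ ≤ t₃ → t₃ < ℓ →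
      dist (ξ t₂) (ξ t₃) ≤ dist (ξ t₁) (ξ t₃))
    {x : X} {r : ℝ} {t₁ t₂ : ℝ} (h₁ : 0 ≤ t₁) (h₁₂ : t₁ < t₂) (h₂ : t₂ < ℓ)
    (hb₁ : ξ t₁ ∈ Metric.ball x r) (hb₂ : ξ t₂ ∈ Metric.ball x r) :
    ∀ t ∈ Set.Ioo t₁ t₂, ξ t ∈ Metric.ball x (3 * r) := by
  intro t ht
  have h := hsc t₁ t t₂ h₁ ht.1.le ht.2.le h₂
  simp only [Metric.mem_ball] at *
  have h12 : dist (ξ t₁) (ξ t₂) ≤ dist (ξ t₁) x + dist x (ξ t₂) := dist_triangle _ _ _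
  have : dist (ξ t) x ≤ dist (ξ t) (ξ t₂) + dist (ξ t₂) x := dist_triangle _ _ _
  rw [dist_comm x (ξ t₂)] at h12
  linarith [dist_comm (ξ t₂) x ▸ hb₂]
end

section
/- Let ξ : [0,ℓ) → ℝⁿ be a self-contracted curve. Then for each τ ∈ [0,ℓ) and all t₁, t₂ ∈ (τ,ℓ) with ξ(t₁) ≠ ξ(τ) and ξ(t₂) ≠ ξ(τ), the Euclidean angle between ξ(t₁) − ξ(τ) and ξ(t₂) − ξ(τ) is strictly less than π/2; equivalently, ⟨ξ(t₁)−ξ(τ), ξ(t₂)−ξ(τ)⟩ > 0. -/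
open InnerProductGeometry

lemma inner_pos_of_sc {n : ℕ} (a b : EuclideanSpace ℝ (Fin n))
    (h : ‖a - b‖ ≤ ‖b‖) (ha : a ≠ 0) : (0 : ℝ) < inner ℝ a b := by
  have h2 : ‖a - b‖ ^ 2 ≤ ‖b‖ ^ 2 := pow_le_pow_left₀ (norm_nonneg _) h 2
  have := @norm_sub_pow_two_real (EuclideanSpace ℝ (Fin n)) _ _ a b
  have hna : (0:ℝ) < ‖a‖ ^ 2 := by
    have := norm_pos_iff.mpr ha
    positivity
  nlinarith

lemma angle_lt_of_inner_pos {n : ℕ} (a b : EuclideanSpace ℝ (Fin n))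
    (h : (0 : ℝ) < inner ℝ a b) : angle a b < Real.pi / 2 := by
  by_contra hle
  push_neg at hle
  have hc : Real.cos (angle a b) ≤ 0 :=
    Real.cos_nonpos_of_pi_div_two_le_of_le hle
      (le_trans (angle_le_pi a b) (by linarith [Real.pi_pos]))
  rw [cos_angle] at hc
  have ha : a ≠ 0 := by rintro rfl; simp [inner_zero_left] at h
  have hb : b ≠ 0 := by rintro rfl; simp [inner_zero_right] at h
  have : (0:ℝ) < ‖a‖ * ‖b‖ := mul_pos (norm_pos_iff.mpr ha) (norm_pos_iff.mpr hb)
  have := div_pos h this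
  linarith

/-- Angle estimate: for a self-contracted curve in `ℝⁿ`, directions from `ξ τ` to later
points make pairwise angles `< π/2`; equivalently their inner product is positive. -/
theorem selfContracted_angle_lt_pi_div_two
    {n : ℕ} {ℓ : ℝ} (ξ : ℝ → EuclideanSpace ℝ (Fin n))
    (hsc : ∀ t₁ t₂ t₃ : ℝ, 0 ≤ t₁ → t₁ ≤ t₂ → t₂ ≤ t₃ → t₃ < ℓ →
      dist (ξ t₂) (ξ t₃) ≤ dist (ξ t₁) (ξ t₃))
    {τ t₁ t₂ : ℝ} (hτ : 0 ≤ τ) (ht₁ : τ < t₁) (ht₂ : τ < t₂)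
    (ht₁ℓ : t₁ < ℓ) (ht₂ℓ : t₂ < ℓ)
    (hne₁ : ξ t₁ ≠ ξ τ) (hne₂ : ξ t₂ ≠ ξ τ) :
    angle (ξ t₁ - ξ τ) (ξ t₂ - ξ τ) < Real.pi / 2 ∧
      (0 : ℝ) < inner ℝ (ξ t₁ - ξ τ) (ξ t₂ - ξ τ) := by
  have key : (0 : ℝ) < inner ℝ (ξ t₁ - ξ τ) (ξ t₂ - ξ τ) := by
    rcases le_total t₁ t₂ with hle | hle
    · have h := hsc τ t₁ t₂ hτ ht₁.le hle ht₂ℓ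
      rw [dist_eq_norm, dist_eq_norm] at h
      have h' : ‖(ξ t₁ - ξ τ) - (ξ t₂ - ξ τ)‖ ≤ ‖ξ t₂ - ξ τ‖ := by
        simpa [sub_sub_sub_cancel_right, norm_sub_rev (ξ τ)] using h
      exact inner_pos_of_sc _ _ h' (sub_ne_zero.mpr hne₁)
    · have h := hsc τ t₂ t₁ hτ ht₂.le hle ht₁ℓ
      rw [dist_eq_norm, dist_eq_norm] at h
      have h' : ‖(ξ t₂ - ξ τ) - (ξ t₁ - ξ τ)‖ ≤ ‖ξ t₁ - ξ τ‖ := by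
        simpa [sub_sub_sub_cancel_right, norm_sub_rev (ξ τ)] using h
      have := inner_pos_of_sc _ _ h' (sub_ne_zero.mpr hne₂)
      rwa [real_inner_comm] at this
  exact ⟨angle_lt_of_inner_pos _ _ key, key⟩
end

section
/- Let f : ℝⁿ → ℝ be a C¹ quasi-convex function and ξ : [0,ℓ) → ℝⁿ a solution of the gradient flow equation ξ'(t) = −∇f(ξ(t)). Then ξ is self-contracted. -/
open InnerProductSpace Set Filter Topology

local notation "⟪" x ", " y "⟫" => @inner ℝ _ _ x y

/-- Derivative of `f` composed with an affine line, expressed via the gradient. -/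
lemma grad_comp_line {n : ℕ} (f : EuclideanSpace ℝ (Fin n) → ℝ)
    (hf : ContDiff ℝ 1 f) (c : ℝ → EuclideanSpace ℝ (Fin n)) (v : EuclideanSpace ℝ (Fin n))
    (t : ℝ) (hc : HasDerivAt c v t) :
    HasDerivAt (fun s => f (c s)) ⟪gradient f (c t), v⟫ t := by
  have hg : HasGradientAt f (gradient f (c t)) (c t) :=
    ((hf.differentiable one_ne_zero) (c t)).hasGradientAt
  have hfd := (hasGradientAt_iff_hasFDerivAt.mp hg)
  have := hfd.comp_hasDerivAt t hc
  simp only [Function.comp_def, InnerProductSpace.toDual_apply_apply] at this; exact this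

/-- For a `C¹` quasi-convex `f`, if `f y ≤ f x` then `⟪∇f x, y - x⟫ ≤ 0`. -/
lemma quasi_grad {n : ℕ} (f : EuclideanSpace ℝ (Fin n) → ℝ)
    (hf : ContDiff ℝ 1 f)
    (hqc : ∀ x y : EuclideanSpace ℝ (Fin n), ∀ s ∈ Set.Ioo (0:ℝ) 1,
      f ((1 - s) • x + s • y) ≤ max (f x) (f y))
    (x y : EuclideanSpace ℝ (Fin n)) (hxy : f y ≤ f x) :
    ⟪gradient f x, y - x⟫ ≤ 0 := by
  set c : ℝ → EuclideanSpace ℝ (Fin n) := fun s => x + s • (y - x) with hc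
  have hcd : HasDerivAt c (y - x) 0 := by
    simpa [hc] using ((hasDerivAt_id (0:ℝ)).smul_const (y - x)).const_add x
  have hφ : HasDerivAt (fun s => f (c s)) ⟪gradient f (c 0), y - x⟫ 0 :=
    grad_comp_line f hf c (y - x) 0 hcd
  have hc0 : c 0 = x := by simp [hc]
  rw [hc0] at hφ
  -- difference quotients are ≤ 0 for s ∈ (0,1)
  have key : ∀ s ∈ Set.Ioo (0:ℝ) 1, f (c s) ≤ f x := by
    intro s hs
    have : c s = (1 - s) • x + s • y := by
      simp [hc]; module
    rw [this]
    calc f ((1 - s) • x + s • y) ≤ max (f x) (f y) := hqc x y s hs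
    _ = f x := max_eq_left hxy
  have htendsto : Tendsto (slope (fun s => f (c s)) 0) (𝓝[>] 0)
      (𝓝 ⟪gradient f x, y - x⟫) :=
    ((hasDerivAt_iff_tendsto_slope.mp hφ).mono_left
      (nhdsWithin_mono 0 (by intro s hs; exact ne_of_gt hs)))
  refine le_of_tendsto htendsto ?_
  filter_upwards [Ioo_mem_nhdsGT_of_mem (by norm_num : (0:ℝ) ∈ Ico 0 1)] with s hs
  have hfc : f (c s) ≤ f x := key s hs
  have hc0' : f (c 0) = f x := by rw [hc0]
  rw [slope_def_field]
  simp only [sub_zero, hc0']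
  exact div_nonpos_of_nonpos_of_nonneg (by linarith) hs.1.le

/-- Gradient curves of a `C¹` quasi-convex function on `ℝⁿ` are self-contracted. -/
theorem gradientCurve_of_quasiconvex_selfContracted
    {n : ℕ} {ℓ : ℝ} (f : EuclideanSpace ℝ (Fin n) → ℝ)
    (hf : ContDiff ℝ 1 f)
    (hqc : ∀ x y : EuclideanSpace ℝ (Fin n), ∀ s ∈ Set.Ioo (0:ℝ) 1,
      f ((1 - s) • x + s • y) ≤ max (f x) (f y))
    (ξ : ℝ → EuclideanSpace ℝ (Fin n))
    (hξ : ∀ t ∈ Set.Ico (0:ℝ) ℓ, HasDerivAt ξ (-(gradient f (ξ t))) t) :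
    ∀ t₁ t₂ t₃ : ℝ, 0 ≤ t₁ → t₁ ≤ t₂ → t₂ ≤ t₃ → t₃ < ℓ →
      dist (ξ t₂) (ξ t₃) ≤ dist (ξ t₁) (ξ t₃) := by
  intro t₁ t₂ t₃ h0 h12 h23 h3
  -- derivative of f ∘ ξ
  have hfξ : ∀ t ∈ Set.Ico (0:ℝ) ℓ,
      HasDerivAt (fun s => f (ξ s)) (-‖gradient f (ξ t)‖^2) t := by
    intro t ht
    have h' := grad_comp_line f hf ξ (-(gradient f (ξ t))) t (hξ t ht)
    have heq : ⟪gradient f (ξ t), -(gradient f (ξ t))⟫ = -‖gradient f (ξ t)‖^2 := by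
      rw [inner_neg_right, real_inner_self_eq_norm_sq]
    rwa [heq] at h'
  -- f ∘ ξ is antitone on [0, ℓ)
  have hanti : ∀ a b : ℝ, 0 ≤ a → a ≤ b → b < ℓ → f (ξ b) ≤ f (ξ a) := by
    intro a b ha hab hb
    have hsub : Icc a b ⊆ Ico 0 ℓ := fun s hs => ⟨ha.trans hs.1, lt_of_le_of_lt hs.2 hb⟩
    have h1 : ∀ s ∈ Icc a b, HasDerivAt (fun s => f (ξ s)) (-‖gradient f (ξ s)‖^2) s :=
      fun s hs => hfξ s (hsub hs)
    have := antitoneOn_of_deriv_nonpos (convex_Icc a b)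
      (fun s hs => ((h1 s hs).continuousAt).continuousWithinAt)
      (fun s hs => ((h1 s (interior_subset hs)).differentiableAt).differentiableWithinAt)
      (fun s hs => by
        rw [(h1 s (interior_subset hs)).deriv]
        exact neg_nonpos.mpr (sq_nonneg _))
    exact this ⟨le_refl a, hab⟩ ⟨hab, le_refl b⟩ hab
  -- g t = ‖ξ t - ξ t₃‖²
  set g : ℝ → ℝ := fun t => ‖ξ t - ξ t₃‖^2 with hg
  have hgd : ∀ t ∈ Icc t₁ t₂, HasDerivAt g
      (2 * ⟪-(gradient f (ξ t)), ξ t - ξ t₃⟫) t := by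
    intro t ht
    have htmem : t ∈ Ico 0 ℓ := ⟨h0.trans ht.1, lt_of_le_of_lt (ht.2.trans h23) h3⟩
    have hξd := hξ t htmem
    have hsub : HasDerivAt (fun s => ξ s - ξ t₃) (-(gradient f (ξ t))) t :=
      hξd.sub_const (ξ t₃)
    have := (hsub.inner ℝ hsub)
    have heq : ⟪ξ t - ξ t₃, -(gradient f (ξ t))⟫ + ⟪-(gradient f (ξ t)), ξ t - ξ t₃⟫
        = 2 * ⟪-(gradient f (ξ t)), ξ t - ξ t₃⟫ := by
      rw [real_inner_comm (ξ t - ξ t₃)]; ring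
    have h2 : HasDerivAt (fun s => ⟪ξ s - ξ t₃, ξ s - ξ t₃⟫)
        (2 * ⟪-(gradient f (ξ t)), ξ t - ξ t₃⟫) t := by
      rw [← heq]; exact this
    have : g = fun s => ⟪ξ s - ξ t₃, ξ s - ξ t₃⟫ := by
      funext s; exact (real_inner_self_eq_norm_sq _).symm
    rw [this]; exact h2
  have hganti : g t₂ ≤ g t₁ := by
    have := antitoneOn_of_deriv_nonpos (convex_Icc t₁ t₂)
      (fun s hs => ((hgd s hs).continuousAt).continuousWithinAt)
      (fun s hs => ((hgd s (interior_subset hs)).differentiableAt).differentiableWithinAt)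
      (fun s hs => by
        have hs' := interior_subset hs
        rw [(hgd s hs').deriv]
        have hfle : f (ξ t₃) ≤ f (ξ s) := hanti s t₃ (h0.trans hs'.1) (hs'.2.trans h23) h3
        have := quasi_grad f hf hqc (ξ s) (ξ t₃) hfle
        have hrw : ⟪-(gradient f (ξ s)), ξ s - ξ t₃⟫ = ⟪gradient f (ξ s), ξ t₃ - ξ s⟫ := by
          rw [inner_neg_left]
          rw [← inner_neg_right]
          congr 1; abel
        rw [hrw]; linarith)
    exact this ⟨le_refl t₁, h12⟩ ⟨h12, le_refl t₂⟩ h12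
  have h1 : dist (ξ t₂) (ξ t₃) ^ 2 ≤ dist (ξ t₁) (ξ t₃) ^ 2 := by
    simpa [dist_eq_norm] using hganti
  have := Real.sqrt_le_sqrt h1
  rwa [Real.sqrt_sq dist_nonneg, Real.sqrt_sq dist_nonneg] at this
end

section
/- Any subset Δ of the unit sphere 𝕊^{n−1} ⊂ ℝⁿ whose angular diameter is at most π/2 is contained in a closed angular ball of radius arccos((2·3ⁿ)⁻¹) around some unit vector v̄; more precisely there exists v̄ ∈ 𝕊^{n−1} with ⟨w, v̄⟩ > (2·3ⁿ)⁻¹ for all w ∈ Δ. -/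
/-- Any subset of the unit sphere of `ℝⁿ` with angular diameter at most `π/2` is contained
in a closed angular ball of radius `arccos((2·3ⁿ)⁻¹)`: there is a unit vector `vbar` with
`⟨w, vbar⟩ > (2·3ⁿ)⁻¹` for all `w` in the set. -/
theorem sphere_diam_le_pi_div_two_radius
    {n : ℕ} (hn : 0 < n) (Δ : Set (EuclideanSpace ℝ (Fin n)))
    (hΔ : ∀ v ∈ Δ, ‖v‖ = 1)
    (hdiam : ∀ v ∈ Δ, ∀ w ∈ Δ, Real.arccos (inner ℝ v w) ≤ Real.pi / 2) :
    ∃ vbar : EuclideanSpace ℝ (Fin n), ‖vbar‖ = 1 ∧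
      ∀ w ∈ Δ, ((2 * 3 ^ n : ℝ))⁻¹ < inner ℝ w vbar := by
  rcases Set.eq_empty_or_nonempty Δ with hΔe | ⟨v₀, hv₀⟩
  · refine ⟨EuclideanSpace.single ⟨0, hn⟩ (1 : ℝ), ?_, ?_⟩
    · simp [EuclideanSpace.norm_single]
    · simp [hΔe]
  -- pairwise inner products are nonnegative
  have hpos : ∀ v ∈ Δ, ∀ w ∈ Δ, (0 : ℝ) ≤ inner ℝ v w := by
    intro v hv w hw
    have h1 : |(inner ℝ v w : ℝ)| ≤ 1 := by
      have := abs_real_inner_le_norm v w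
      rwa [hΔ v hv, hΔ w hw, mul_one] at this
    have h2 := hdiam v hv w hw
    have harc : Real.cos (Real.pi / 2) ≤ Real.cos (Real.arccos (inner ℝ v w)) := by
      apply Real.cos_le_cos_of_nonneg_of_le_pi (Real.arccos_nonneg _)
        (by linarith [Real.pi_pos]) h2
    rwa [Real.cos_pi_div_two, Real.cos_arccos (by linarith [abs_le.mp h1])
      (by linarith [abs_le.mp h1])] at harc
  -- every point of the convex hull has norm² ≥ (n+1)⁻¹
  have hullbound : ∀ x ∈ convexHull ℝ Δ, ((n : ℝ) + 1)⁻¹ ≤ ‖x‖ ^ 2 := by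
    intro x hx
    obtain ⟨ι, hfin, z, w, hrange, hai, hwpos, hwsum, hzsum⟩ :=
      eq_pos_convex_span_of_mem_convexHull hx
    have hz : ∀ i, z i ∈ Δ := fun i => hrange ⟨i, rfl⟩
    have hcard : Fintype.card ι ≤ n + 1 := by
      have h1 := hai.card_le_finrank_succ
      have h2 : Module.finrank ℝ (vectorSpan ℝ (Set.range z)) ≤ n := by
        have := Submodule.finrank_le (vectorSpan ℝ (Set.range z))
        rwa [finrank_euclideanSpace_fin] at this
      omega
    have hxx : ‖x‖ ^ 2 = ∑ i, ∑ j, w i * (w j * inner ℝ (z i) (z j)) := by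
      rw [← real_inner_self_eq_norm_sq, ← hzsum]
      simp only [sum_inner, inner_sum, real_inner_smul_left, real_inner_smul_right]
      exact Finset.sum_congr rfl fun i _ => Finset.sum_congr rfl fun j _ => by
        rw [real_inner_comm]
    have hdiag : ∑ i, w i ^ 2 ≤ ‖x‖ ^ 2 := by
      rw [hxx]
      apply Finset.sum_le_sum
      intro i _
      have hself : (inner ℝ (z i) (z i) : ℝ) = 1 := by
        rw [real_inner_self_eq_norm_sq, hΔ (z i) (hz i)]; norm_num
      calc w i ^ 2 = w i * (w i * inner ℝ (z i) (z i)) := by rw [hself]; ring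
        _ ≤ ∑ j, w i * (w j * inner ℝ (z i) (z j)) := by
            exact Finset.single_le_sum (f := fun j => w i * (w j * inner ℝ (z i) (z j)))
              (fun j _ => mul_nonneg (hwpos i).le
                (mul_nonneg (hwpos j).le (hpos _ (hz i) _ (hz j)))) (Finset.mem_univ i)
    have hcauchy : (1 : ℝ) ≤ (Fintype.card ι : ℝ) * ∑ i, w i ^ 2 := by
      have := sq_sum_le_card_mul_sum_sq (s := (Finset.univ : Finset ι)) (f := w)
      rw [hwsum] at this
      simpa using this
    have hcardpos : (0 : ℝ) < Fintype.card ι := by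
      have : Nonempty ι := by
        by_contra h
        rw [not_nonempty_iff] at h
        simp [Finset.univ_eq_empty] at hwsum
      exact_mod_cast Fintype.card_pos
    have hsq : ((n : ℝ) + 1)⁻¹ ≤ ∑ i, w i ^ 2 := by
      have hwsq : (0:ℝ) ≤ ∑ i, w i ^ 2 := by positivity
      have h2 : ((Fintype.card ι : ℝ)) * ∑ i, w i ^ 2 ≤ ((n : ℝ) + 1) * ∑ i, w i ^ 2 := by
        apply mul_le_mul_of_nonneg_right _ hwsq
        exact_mod_cast hcard
      rw [inv_eq_one_div, div_le_iff₀ (by positivity)]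
      nlinarith
    linarith
  -- minimal norm point of the closed convex hull
  set K := closure (convexHull ℝ Δ) with hK
  have hKconv : Convex ℝ K := (convex_convexHull ℝ Δ).closure
  have hKne : K.Nonempty := ⟨v₀, subset_closure (subset_convexHull ℝ Δ hv₀)⟩
  have hKcomp : IsComplete K := isClosed_closure.isComplete
  obtain ⟨p, hpK, hpmin⟩ := exists_norm_eq_iInf_of_complete_convex hKne hKcomp hKconv 0
  have hproj := (norm_eq_iInf_iff_real_inner_le_zero hKconv hpK).mp hpmin
  -- ⟨p, w⟩ ≥ ‖p‖² for w ∈ K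
  have hinner : ∀ w ∈ Δ, ‖p‖ ^ 2 ≤ inner ℝ p w := by
    intro w hw
    have hwK : w ∈ K := subset_closure (subset_convexHull ℝ Δ hw)
    have := hproj w hwK
    rw [zero_sub, inner_neg_left, inner_sub_right, real_inner_self_eq_norm_sq] at this
    linarith
  -- norm bound transfers to the closure
  have hpnorm : ((n : ℝ) + 1)⁻¹ ≤ ‖p‖ ^ 2 := by
    have hcl : IsClosed {x : EuclideanSpace ℝ (Fin n) | ((n : ℝ) + 1)⁻¹ ≤ ‖x‖ ^ 2} :=
      isClosed_le continuous_const (by fun_prop)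
    have : K ⊆ {x : EuclideanSpace ℝ (Fin n) | ((n : ℝ) + 1)⁻¹ ≤ ‖x‖ ^ 2} :=
      closure_minimal hullbound hcl
    exact this hpK
  have hnp : (0 : ℝ) < ‖p‖ := by
    have : (0:ℝ) < ((n : ℝ) + 1)⁻¹ := by positivity
    nlinarith [norm_nonneg p]
  -- the key numeric inequality : (2·3ⁿ)⁻¹ < ‖p‖
  have hnum : ((2 * 3 ^ n : ℝ))⁻¹ < ‖p‖ := by
    rw [← pow_lt_pow_iff_left₀ (by positivity) (norm_nonneg p) (two_ne_zero)]
    calc ((2 * 3 ^ n : ℝ))⁻¹ ^ 2 < ((n : ℝ) + 1)⁻¹ := by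
          rw [inv_pow, inv_lt_inv₀ (by positivity) (by positivity)]
          have h2 : ((n : ℝ)) < 2 ^ n := by exact_mod_cast Nat.lt_two_pow_self (n := n)
          have h3 : (2 : ℝ) ^ n ≤ 3 ^ n := by
            apply pow_le_pow_left₀ <;> norm_num
          have h4 : (1 : ℝ) ≤ 3 ^ n := one_le_pow₀ (by norm_num)
          nlinarith
      _ ≤ ‖p‖ ^ 2 := hpnorm
  refine ⟨‖p‖⁻¹ • p, ?_, ?_⟩
  · rw [norm_smul, norm_inv, norm_norm, inv_mul_cancel₀ hnp.ne']
  · intro w hw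
    have h1 := hinner w hw
    rw [real_inner_smul_right, real_inner_comm]
    calc ((2 * 3 ^ n : ℝ))⁻¹ < ‖p‖ := hnum
      _ = ‖p‖⁻¹ * ‖p‖ ^ 2 := by field_simp
      _ ≤ ‖p‖⁻¹ * inner ℝ p w := by
          apply mul_le_mul_of_nonneg_left h1 (by positivity)
end

section
/- Let ξ : [0,∞) → L²(ℝ) be defined by ξ(t) = f_t, where f_t is the indicator function of the interval [t, t+1]. Then ξ is a continuous self-contracted curve with bounded image (‖f_t‖ = 1 for all t), but ξ has infinite length. -/
open MeasureTheory
open scoped symmDiff ENNReal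

lemma symmdiff_vol (s t : ℝ) (hst : s ≤ t) :
    volume (Set.Icc s (s+1) ∆ Set.Icc t (t+1)) = ENNReal.ofReal (2 * min (t - s) 1) := by
  have hAB : Set.Icc s (s+1) ∩ Set.Icc t (t+1) = Set.Icc t (s+1) := by
    rw [Set.Icc_inter_Icc, max_eq_right hst, min_eq_left (by linarith)]
  have hA : volume (Set.Icc s (s+1) \ Set.Icc t (t+1)) = ENNReal.ofReal (min (t - s) 1) := by
    rw [← Set.diff_self_inter, hAB, measure_diff (Set.Icc_subset_Icc hst le_rfl)
      measurableSet_Icc.nullMeasurableSet (by simp), Real.volume_Icc, Real.volume_Icc]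
    rcases le_or_gt t (s+1) with h | h
    · rw [min_eq_left (by linarith), ← ENNReal.ofReal_sub _ (by linarith)]
      ring_nf
    · rw [min_eq_right (by linarith),
        ENNReal.ofReal_of_nonpos (show s + 1 - t ≤ 0 by linarith)]
      norm_num
  have hB : volume (Set.Icc t (t+1) \ Set.Icc s (s+1)) = ENNReal.ofReal (min (t - s) 1) := by
    rw [← Set.diff_self_inter, Set.inter_comm, hAB,
      measure_diff (Set.Icc_subset_Icc le_rfl (by linarith))
        measurableSet_Icc.nullMeasurableSet (by simp), Real.volume_Icc, Real.volume_Icc]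
    rcases le_or_gt t (s+1) with h | h
    · rw [min_eq_left (by linarith), ← ENNReal.ofReal_sub _ (by linarith)]
      ring_nf
    · rw [min_eq_right (by linarith),
        ENNReal.ofReal_of_nonpos (show s + 1 - t ≤ 0 by linarith)]
      norm_num
  rw [Set.symmDiff_def, measure_union (by exact Set.disjoint_of_subset_left Set.diff_subset  (Set.disjoint_sdiff_right)) ((measurableSet_Icc.diff measurableSet_Icc)), hA, hB,
    ← ENNReal.ofReal_add (le_min (by linarith) zero_le_one) (le_min (by linarith) zero_le_one)]
  ring_nf

lemma eLp_formula (s t : ℝ) (hst : s ≤ t) :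
    eLpNorm ((Set.Icc s (s+1)).indicator (fun _ => (1:ℝ))
        - (Set.Icc t (t+1)).indicator (fun _ => (1:ℝ))) 2 volume
      = ENNReal.ofReal (2 * min (t - s) 1) ^ (1/2 : ℝ) := by
  rw [eLpNorm_eq_lintegral_rpow_enorm_toReal (by norm_num) (by norm_num)]
  have hpt : ∀ x : ℝ, (‖((Set.Icc s (s+1)).indicator (fun _ => (1:ℝ))
        - (Set.Icc t (t+1)).indicator (fun _ => (1:ℝ))) x‖ₑ) ^ ((2:ℝ≥0∞).toReal)
      = (Set.Icc s (s+1) ∆ Set.Icc t (t+1)).indicator (fun _ => (1:ℝ≥0∞)) x := by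
    intro x
    by_cases hA : x ∈ Set.Icc s (s+1) <;> by_cases hB : x ∈ Set.Icc t (t+1) <;>
      simp [Set.indicator, hA, hB, Set.mem_symmDiff]
  simp_rw [Pi.sub_apply] at hpt ⊢
  simp_rw [hpt]
  rw [lintegral_indicator (measurableSet_Icc.symmDiff measurableSet_Icc)]
  rw [setLIntegral_one, symmdiff_vol s t hst]
  norm_num

lemma dist_eq (ξ : ℝ → Lp ℝ 2 (volume : Measure ℝ))
    (hξ : ∀ t : ℝ, (ξ t : ℝ → ℝ) =ᵐ[volume]
      (Set.Icc t (t + 1)).indicator (fun _ => (1 : ℝ)))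
    (s t : ℝ) (hst : s ≤ t) :
    dist (ξ s) (ξ t) = Real.sqrt (2 * min (t - s) 1) := by
  have hnn : 0 ≤ 2 * min (t - s) 1 :=
    mul_nonneg (by norm_num) (le_min (by linarith) zero_le_one)
  have h : eLpNorm (⇑(ξ s) - ⇑(ξ t)) 2 volume
      = eLpNorm ((Set.Icc s (s+1)).indicator (fun _ => (1:ℝ))
        - (Set.Icc t (t+1)).indicator (fun _ => (1:ℝ))) 2 volume :=
    eLpNorm_congr_ae (Filter.EventuallyEq.sub (hξ s) (hξ t))
  rw [Lp.dist_def, h, eLp_formula s t hst, ← ENNReal.toReal_rpow,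
    ENNReal.toReal_ofReal hnn, Real.sqrt_eq_rpow]


/-- The curve `t ↦ 𝟙_{[t,t+1]}` in `L²(ℝ)` is continuous, self-contracted and bounded
(of norm one), but has infinite length. -/
theorem indicator_curve_selfContracted_infinite_length
    (ξ : ℝ → Lp ℝ 2 (volume : Measure ℝ))
    (hξ : ∀ t : ℝ, (ξ t : ℝ → ℝ) =ᵐ[volume]
      (Set.Icc t (t + 1)).indicator (fun _ => (1 : ℝ))) :
    Continuous ξ ∧
    (∀ t₁ t₂ t₃ : ℝ, t₁ ≤ t₂ → t₂ ≤ t₃ →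
      dist (ξ t₂) (ξ t₃) ≤ dist (ξ t₁) (ξ t₃)) ∧
    (∀ t : ℝ, ‖ξ t‖ = 1) ∧
    (∀ C : ℝ, ∃ (k : ℕ) (t : Fin (k + 1) → ℝ), t 0 = 0 ∧ StrictMono t ∧
      C < ∑ i : Fin k, dist (ξ (t i.castSucc)) (ξ (t i.succ))) := by
  have hd := dist_eq ξ hξ
  have hd' : ∀ a b : ℝ, dist (ξ a) (ξ b) = Real.sqrt (2 * min |a - b| 1) := by
    intro a b
    rcases le_total a b with h | h
    · rw [hd a b h, abs_sub_comm, abs_of_nonneg (by linarith)]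
    · rw [dist_comm, hd b a h, abs_of_nonneg (by linarith)]
  refine ⟨?_, ?_, ?_, ?_⟩
  · rw [Metric.continuous_iff]
    intro b ε hε
    refine ⟨ε ^ 2 / 2, by positivity, fun a hab => ?_⟩
    rw [hd' a b]
    rw [Real.sqrt_lt' hε]
    have h1 : min |a - b| 1 ≤ |a - b| := min_le_left _ _
    rw [Real.dist_eq] at hab
    nlinarith
  · intro t₁ t₂ t₃ h12 h23
    rw [hd t₂ t₃ h23, hd t₁ t₃ (h12.trans h23)]
    exact Real.sqrt_le_sqrt
      (mul_le_mul_of_nonneg_left (min_le_min (by linarith) le_rfl) (by norm_num))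
  · intro t
    rw [Lp.norm_def, eLpNorm_congr_ae (hξ t),
      eLpNorm_indicator_const measurableSet_Icc (by norm_num) (by norm_num)]
    simp [Real.volume_Icc]
  · intro C
    obtain ⟨k, hk⟩ := exists_nat_gt C
    refine ⟨k, fun i => (i : ℝ), by simp, ?_, ?_⟩
    · intro i j hij
      show ((i : ℕ) : ℝ) < ((j : ℕ) : ℝ)
      exact_mod_cast hij
    · have key : ∀ i : Fin k, (1 : ℝ) ≤
          dist (ξ ((i.castSucc : Fin (k+1)) : ℝ)) (ξ ((i.succ : Fin (k+1)) : ℝ)) := by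
        intro i
        have h1 : ((i.castSucc : Fin (k+1)) : ℝ) = (i : ℕ) := by simp
        have h2 : ((i.succ : Fin (k+1)) : ℝ) = (i : ℕ) + 1 := by
          simp [Fin.val_succ]
        rw [h1, h2, hd _ _ (by linarith)]
        have : ((i:ℕ):ℝ) + 1 - (i:ℕ) = 1 := by ring
        rw [this]
        norm_num
      calc C < k := hk
        _ = ∑ _i : Fin k, (1 : ℝ) := by simp
        _ ≤ _ := Finset.sum_le_sum fun i _ => key i
end

section
/- Every self-contracted curve ξ : [0,ℓ) → ℝⁿ with bounded image has finite length; moreover L(ξ) ≤ Cₙ · diam(ξ([0,ℓ))) where Cₙ depends only on n. -/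
open scoped RealInnerProductSpace

set_option maxHeartbeats 2000000

section SCAux

variable {n : ℕ}

private lemma sc_norm_sq (y : EuclideanSpace ℝ (Fin n)) : ‖y‖^2 = ∑ c, (y c)^2 := by
  rw [EuclideanSpace.norm_eq, Real.sq_sqrt (by positivity)]
  simp [sq_abs]

private lemma sc_coord_sq_le (y : EuclideanSpace ℝ (Fin n)) (c : Fin n) :
    (y c)^2 ≤ ‖y‖^2 := by
  rw [sc_norm_sq]
  exact Finset.single_le_sum (f := fun i => (y i)^2) (fun i _ => sq_nonneg _) (Finset.mem_univ c)

private lemma sc_abs_coord_le (y : EuclideanSpace ℝ (Fin n)) (c : Fin n) :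
    |y c| ≤ ‖y‖ := by
  have h := sc_coord_sq_le y c
  have h2 : |y c| = Real.sqrt ((y c)^2) := (Real.sqrt_sq_eq_abs _).symm
  rw [h2]
  calc Real.sqrt ((y c)^2) ≤ Real.sqrt (‖y‖^2) := Real.sqrt_le_sqrt h
  _ = ‖y‖ := Real.sqrt_sq (norm_nonneg _)

private lemma sc_inner_nonneg {x z z' : EuclideanSpace ℝ (Fin n)}
    (h : dist z z' ≤ dist x z') : 0 ≤ ⟪z - x, z' - x⟫ := by
  rw [dist_eq_norm, dist_eq_norm] at h
  have h2 : ‖z - z'‖^2 ≤ ‖x - z'‖^2 := by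
    have := norm_nonneg (z - z')
    nlinarith
  have e1 : z - z' = (z - x) - (z' - x) := by abel
  have e2 : ‖x - z'‖ = ‖z' - x‖ := norm_sub_rev _ _
  rw [e1, e2] at h2
  have expand : ‖(z - x) - (z' - x)‖^2
      = ‖z - x‖^2 - 2 * ⟪z - x, z' - x⟫ + ‖z' - x‖^2 := norm_sub_sq_real _ _
  nlinarith [sq_nonneg ‖z - x‖]

/-- Unit vectors with pairwise nonnegative inner products lie in a uniform cone of
half-width `arccos (1/sqrt (n²+1))`. -/
private lemma sc_center {ι : Type} [Fintype ι] [Nonempty ι]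
    (u : ι → EuclideanSpace ℝ (Fin n)) (hu : ∀ i, ‖u i‖ = 1)
    (hp : ∀ i j, 0 ≤ ⟪u i, u j⟫) :
    ∃ e : EuclideanSpace ℝ (Fin n), ‖e‖ = 1 ∧
      ∀ i, (Real.sqrt ((n:ℝ)^2 + 1))⁻¹ ≤ ⟪u i, e⟫ := by
  classical
  have hn : 0 < n := by
    by_contra hcon
    have hn0 : n = 0 := by omega
    obtain ⟨i⟩ := ‹Nonempty ι›
    have h0 : ‖u i‖^2 = 0 := by
      rw [sc_norm_sq]
      subst hn0
      simp
    rw [hu i] at h0; norm_num at h0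
  obtain ⟨i₀⟩ := ‹Nonempty ι›
  have hKne : (stdSimplex ℝ ι).Nonempty := by
    refine ⟨fun j => if j = i₀ then 1 else 0, fun j => by by_cases h : j = i₀ <;> simp [h], ?_⟩
    simp [Finset.sum_ite_eq']
  have hfc : Continuous fun lam : ι → ℝ => ‖∑ i, lam i • u i‖ ^ 2 := by
    have h1 : Continuous fun lam : ι → ℝ => ∑ i, lam i • u i :=
      continuous_finset_sum _ fun i _ => (continuous_apply i).smul continuous_const
    exact h1.norm.pow 2
  obtain ⟨lam, hlam, hmin⟩ := (isCompact_stdSimplex ℝ ι).exists_isMinOn hKne hfc.continuousOn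
  have hlam0 : ∀ i, 0 ≤ lam i := hlam.1
  have hlam1 : ∑ i, lam i = 1 := hlam.2
  set x : EuclideanSpace ℝ (Fin n) := ∑ i, lam i • u i with hx
  set d2 := ‖x‖^2 with hd2def
  have huu : ∀ j, ⟪u j, u j⟫ = 1 := by
    intro j; rw [real_inner_self_eq_norm_sq, hu j]; norm_num
  have hux : ∀ j, ⟪u j, x⟫ = ∑ i, lam i * ⟪u j, u i⟫ := by
    intro j
    rw [hx, inner_sum]
    exact Finset.sum_congr rfl fun i _ => real_inner_smul_right _ _ _
  have hd2 : d2 = ∑ j, lam j * ⟪u j, x⟫ := by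
    rw [hd2def, ← real_inner_self_eq_norm_sq]
    nth_rewrite 1 [hx]
    rw [sum_inner]
    exact Finset.sum_congr rfl fun j _ => real_inner_smul_left _ _ _
  have hujx_ge : ∀ j, lam j ≤ ⟪u j, x⟫ := by
    intro j
    rw [hux j]
    have h : lam j * ⟪u j, u j⟫ ≤ ∑ i, lam i * ⟪u j, u i⟫ :=
      Finset.single_le_sum (f := fun i => lam i * ⟪u j, u i⟫)
        (fun i _ => mul_nonneg (hlam0 i) (hp j i)) (Finset.mem_univ j)
    rw [huu j] at h; linarith
  have hd2pos : 0 < d2 := by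
    obtain ⟨i, hi⟩ : ∃ i, lam i ≠ 0 := by
      by_contra hno; push_neg at hno
      rw [Finset.sum_eq_zero (fun i _ => hno i)] at hlam1
      norm_num at hlam1
    have hipos : 0 < lam i := lt_of_le_of_ne (hlam0 i) (Ne.symm hi)
    have h1 : lam i * lam i ≤ lam i * ⟪u i, x⟫ :=
      mul_le_mul_of_nonneg_left (hujx_ge i) (hlam0 i)
    have h2 : lam i * ⟪u i, x⟫ ≤ ∑ j, lam j * ⟪u j, x⟫ := by
      apply Finset.single_le_sum (f := fun j => lam j * ⟪u j, x⟫) _ (Finset.mem_univ i)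
      intro j _
      exact mul_nonneg (hlam0 j) (le_trans (hlam0 j) (hujx_ge j))
    rw [← hd2] at h2
    nlinarith
  have hxnorm : 0 < ‖x‖ := by
    rcases (norm_nonneg x).lt_or_eq with h | h
    · exact h
    · exfalso; rw [hd2def, ← h] at hd2pos; norm_num at hd2pos
  have hKKT1 : ∀ j, d2 ≤ ⟪u j, x⟫ := by
    intro j
    by_contra hcon
    push_neg at hcon
    by_cases huj : u j = x
    · rw [huj, real_inner_self_eq_norm_sq, ← hd2def] at hcon; exact lt_irrefl _ hcon
    · set Q := ‖u j - x‖^2 with hQ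
      have hQpos : 0 < Q := by
        have h1 : u j - x ≠ 0 := sub_ne_zero.mpr huj
        have h2 := norm_pos_iff.mpr h1
        positivity
      set beta := d2 - ⟪u j, x⟫ with hbeta
      have hbpos : 0 < beta := by rw [hbeta]; linarith
      set s := min 1 (beta / Q) with hs
      have hspos : 0 < s := lt_min one_pos (div_pos hbpos hQpos)
      have hs1 : s ≤ 1 := min_le_left _ _
      have hsQ : s * Q ≤ beta := by
        have h1 : s ≤ beta / Q := min_le_right _ _
        rw [le_div_iff₀ hQpos] at h1; exact h1
      set lam' := fun i => (1 - s) * lam i + s * (if i = j then 1 else 0) with hlam'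
      have hmem' : lam' ∈ stdSimplex ℝ ι := by
        constructor
        · intro i
          have h1s : (0:ℝ) ≤ 1 - s := by linarith
          by_cases h : i = j
          · simp only [hlam', if_pos h, mul_one]
            have h2 : (0:ℝ) ≤ (1 - s) * lam i := mul_nonneg h1s (hlam0 i)
            linarith [hspos.le]
          · simp only [hlam', if_neg h, mul_zero, add_zero]
            exact mul_nonneg h1s (hlam0 i)
        · rw [hlam']
          simp only
          rw [Finset.sum_add_distrib, ← Finset.mul_sum, hlam1, ← Finset.mul_sum,
            Finset.sum_ite_eq']
          simp
      have hvec : ∑ i, lam' i • u i = x + s • (u j - x) := by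
        rw [hlam']
        simp only [add_smul, mul_smul]
        rw [Finset.sum_add_distrib, ← Finset.smul_sum, ← Finset.smul_sum, ← hx]
        have h1 : ∑ i, (if i = j then (1:ℝ) else 0) • u i = u j := by
          have h2 : ∀ i, (if i = j then (1:ℝ) else 0) • u i
              = (if i = j then u i else 0) := by
            intro i; rw [ite_smul]; simp
          rw [Finset.sum_congr rfl (fun i _ => h2 i), Finset.sum_ite_eq']
          simp
        rw [h1, smul_sub, sub_smul, one_smul]
        abel
      have hcomp : ‖x + s • (u j - x)‖^2 < d2 := by
        have expand : ‖x + s • (u j - x)‖^2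
            = ‖x‖^2 + 2 * (s * ⟪x, u j - x⟫) + s^2 * Q := by
          rw [norm_add_sq_real, real_inner_smul_right, norm_smul]
          rw [hQ, mul_pow]
          simp [sq_abs]
        have hip : ⟪x, u j - x⟫ = -beta := by
          rw [inner_sub_right, real_inner_self_eq_norm_sq, real_inner_comm, hbeta, ← hd2def]
          ring
        rw [expand, hip, ← hd2def]
        nlinarith
      have hge := (isMinOn_iff.mp hmin) lam' hmem'
      rw [hvec, ← hx, ← hd2def] at hge
      linarith
  have hsupp : ∀ j, 0 < lam j → ⟪u j, x⟫ = d2 := by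
    intro j hj
    by_contra hne2
    have hstrict : d2 < ⟪u j, x⟫ := lt_of_le_of_ne (hKKT1 j) (Ne.symm hne2)
    have h2 : ∑ i, lam i * d2 < ∑ i, lam i * ⟪u i, x⟫ := by
      apply Finset.sum_lt_sum
      · intro i _; exact mul_le_mul_of_nonneg_left (hKKT1 i) (hlam0 i)
      · exact ⟨j, Finset.mem_univ j, mul_lt_mul_of_pos_left hstrict hj⟩
    rw [← Finset.sum_mul, hlam1, one_mul, ← hd2] at h2
    exact lt_irrefl _ h2
  have hcast1 : (1:ℝ) ≤ (n:ℝ) := by exact_mod_cast hn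
  have hd2target : 1/((n:ℝ)^2+1) ≤ d2 := by
    by_cases hbig : (1:ℝ) ≤ d2
    · have h1 : 1/((n:ℝ)^2+1) ≤ 1 := by
        rw [div_le_one (by positivity)]
        nlinarith [sq_nonneg (n:ℝ)]
      linarith
    · push_neg at hbig
      set q : ι → EuclideanSpace ℝ (Fin n) := fun i => u i - x with hq
      have hqsum : ∑ i, lam i • q i = 0 := by
        rw [hq]
        simp only [smul_sub]
        rw [Finset.sum_sub_distrib, ← hx, ← Finset.sum_smul, hlam1, one_smul, sub_self]
      have hqnorm : ∀ i, 0 < lam i → ‖q i‖^2 = 1 - d2 := by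
        intro i hi
        have h1 : q i = u i - x := rfl
        rw [h1, norm_sub_sq_real, hu i, hsupp i hi, ← hd2def]
        ring
      have hqpair : ∀ i j, 0 < lam i → 0 < lam j → -d2 ≤ ⟪q i, q j⟫ := by
        intro i j hi hj
        have hexp : ⟪q i, q j⟫ = ⟪u i, u j⟫ - d2 := by
          have e1 : q i = u i - x := rfl
          have e2 : q j = u j - x := rfl
          rw [e1, e2, inner_sub_left, inner_sub_right, inner_sub_right,
            real_inner_self_eq_norm_sq, ← hd2def]
          have c1 : ⟪x, u j⟫ = d2 := by rw [real_inner_comm]; exact hsupp j hj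
          have c2 : ⟪u i, x⟫ = d2 := hsupp i hi
          rw [c1, c2]; ring
        rw [hexp]
        have := hp i j; linarith
      have htot : ∑ c : Fin n, (∑ i, lam i * (q i c)^2) = 1 - d2 := by
        rw [Finset.sum_comm]
        have hrow : ∀ i, ∑ c : Fin n, lam i * (q i c)^2 = lam i * ‖q i‖^2 := by
          intro i
          rw [← Finset.mul_sum, ← sc_norm_sq]
        rw [Finset.sum_congr rfl (fun i _ => hrow i)]
        have hrow2 : ∀ i, lam i * ‖q i‖^2 = lam i * (1 - d2) := by
          intro i
          rcases (hlam0 i).lt_or_eq with h | h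
          · rw [hqnorm i h]
          · rw [← h]; ring
        rw [Finset.sum_congr rfl (fun i _ => hrow2 i), ← Finset.sum_mul, hlam1, one_mul]
      obtain ⟨c, hc⟩ : ∃ c : Fin n, (1-d2)/n ≤ ∑ i, lam i * (q i c)^2 := by
        by_contra hno; push_neg at hno
        have hne : (Finset.univ : Finset (Fin n)).Nonempty :=
          ⟨⟨0, hn⟩, Finset.mem_univ _⟩
        have hlt : ∑ c : Fin n, (∑ i, lam i * (q i c)^2)
            < ∑ _c : Fin n, ((1-d2)/n) :=
          Finset.sum_lt_sum_of_nonempty hne (fun c _ => hno c)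
        rw [htot, Finset.sum_const, Finset.card_univ, Fintype.card_fin,
          nsmul_eq_mul] at hlt
        have hnn : (n:ℝ) ≠ 0 := by positivity
        rw [mul_div_cancel₀ _ hnn] at hlt
        exact lt_irrefl _ hlt
      set T := ∑ i, lam i * |q i c| with hT
      have hTnonneg : 0 ≤ T := by
        apply Finset.sum_nonneg
        intro i _; exact mul_nonneg (hlam0 i) (abs_nonneg _)
      have hTc : ∑ i, lam i * (q i c) = 0 := by
        have happ := congrArg (fun (y : EuclideanSpace ℝ (Fin n)) => y c) hqsum
        simp only at happ
        simp only [WithLp.ofLp_sum, Finset.sum_apply, WithLp.ofLp_smul, WithLp.ofLp_zero, Pi.smul_apply,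
          smul_eq_mul, Pi.zero_apply] at happ
        exact happ
      -- coordinate sum bound
      set s1 := Real.sqrt (1 - d2) with hs1
      have hs1nonneg : 0 ≤ s1 := Real.sqrt_nonneg _
      have hs1sq : s1^2 = 1 - d2 := Real.sq_sqrt (by linarith)
      have hqnorm' : ∀ i, 0 < lam i → ‖q i‖ = s1 := by
        intro i hi
        rw [hs1, ← hqnorm i hi, Real.sqrt_sq (norm_nonneg _)]
      have hSc_le : ∑ i, lam i * (q i c)^2 ≤ T * s1 := by
        rw [hT, Finset.sum_mul]
        apply Finset.sum_le_sum
        intro i _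
        rcases (hlam0 i).lt_or_eq with h | h
        · have h1 : |q i c| ≤ s1 := by
            rw [← hqnorm' i h]; exact sc_abs_coord_le _ _
          have h2 : (q i c)^2 = |q i c| * |q i c| := by rw [← sq_abs]; ring
          rw [h2]
          have h3 : |q i c| * |q i c| ≤ |q i c| * s1 :=
            mul_le_mul_of_nonneg_left h1 (abs_nonneg _)
          nlinarith [h.le]
        · rw [← h]; simp
      -- positive/negative split along coordinate c
      set pos : Finset ι := Finset.univ.filter (fun i => 0 < q i c) with hposdef
      set P := ∑ i ∈ pos, lam i * (q i c) with hPdef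
      have hsplit0 : P + ∑ i ∈ Finset.univ.filter (fun i => ¬ 0 < q i c),
          lam i * (q i c) = 0 := by
        rw [hPdef, hposdef, Finset.sum_filter_add_sum_filter_not]
        exact hTc
      have hTsplit : T = 2 * P := by
        have e0 : T = ∑ i ∈ pos, lam i * |q i c|
            + ∑ i ∈ Finset.univ.filter (fun i => ¬ 0 < q i c), lam i * |q i c| := by
          rw [hT, hposdef, Finset.sum_filter_add_sum_filter_not]
        have e1 : ∑ i ∈ pos, lam i * |q i c| = P := by
          rw [hPdef]
          apply Finset.sum_congr rfl
          intro i hi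
          rw [hposdef] at hi
          have := (Finset.mem_filter.mp hi).2
          rw [abs_of_pos this]
        have e2 : ∑ i ∈ Finset.univ.filter (fun i => ¬ 0 < q i c), lam i * |q i c|
            = - ∑ i ∈ Finset.univ.filter (fun i => ¬ 0 < q i c), lam i * (q i c) := by
          rw [← Finset.sum_neg_distrib]
          apply Finset.sum_congr rfl
          intro i hi
          have hle : q i c ≤ 0 := le_of_not_gt (Finset.mem_filter.mp hi).2
          rw [abs_of_nonpos hle]; ring
        rw [e0, e1, e2]
        linarith [hsplit0]
      have hPnonneg : 0 ≤ P := by linarith [hTnonneg, hTsplit]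
      set A : EuclideanSpace ℝ (Fin n) := ∑ i ∈ pos, lam i • q i with hA
      set B : EuclideanSpace ℝ (Fin n) :=
        ∑ i ∈ Finset.univ.filter (fun i => ¬ 0 < q i c), lam i • q i with hB
      have hAB : A + B = 0 := by
        rw [hA, hB, hposdef, Finset.sum_filter_add_sum_filter_not]
        exact hqsum
      have hAc : A c = P := by
        rw [hA, hPdef, WithLp.ofLp_sum, Finset.sum_apply]
        exact Finset.sum_congr rfl (fun i _ => rfl)
      have hinnerAB : ⟪A, B⟫
          = ∑ i ∈ pos, ∑ j ∈ Finset.univ.filter (fun i => ¬ 0 < q i c),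
              (lam i * lam j) * ⟪q i, q j⟫ := by
        rw [hA, hB, sum_inner]
        apply Finset.sum_congr rfl
        intro i _
        rw [inner_sum]
        apply Finset.sum_congr rfl
        intro j _
        rw [real_inner_smul_left, real_inner_smul_right]
        ring
      set mup := ∑ i ∈ pos, lam i with hmup
      set mum := ∑ i ∈ Finset.univ.filter (fun i => ¬ 0 < q i c), lam i with hmum
      have hmu1 : mup + mum = 1 := by
        rw [hmup, hmum, hposdef, Finset.sum_filter_add_sum_filter_not]
        exact hlam1
      have hmupn : 0 ≤ mup := Finset.sum_nonneg (fun i _ => hlam0 i)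
      have hmumn : 0 ≤ mum := Finset.sum_nonneg (fun i _ => hlam0 i)
      have hprod : ∑ i ∈ pos, ∑ j ∈ Finset.univ.filter (fun i => ¬ 0 < q i c),
          lam i * lam j = mup * mum := by
        rw [hmup, hmum, Finset.sum_mul_sum]
      have hABlow : -(d2 * (mup * mum)) ≤ ⟪A, B⟫ := by
        have e1 : -(d2 * (mup * mum)) = ∑ i ∈ pos,
            ∑ j ∈ Finset.univ.filter (fun i => ¬ 0 < q i c), -(d2 * (lam i * lam j)) := by
          rw [← hprod, Finset.mul_sum, ← Finset.sum_neg_distrib]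
          apply Finset.sum_congr rfl
          intro i _
          rw [Finset.mul_sum, ← Finset.sum_neg_distrib]
        rw [hinnerAB, e1]
        apply Finset.sum_le_sum
        intro i _
        apply Finset.sum_le_sum
        intro j _
        rcases (hlam0 i).lt_or_eq with hi | hi
        · rcases (hlam0 j).lt_or_eq with hj | hj
          · have h1 := hqpair i j hi hj
            have h2 : 0 ≤ lam i * lam j := mul_nonneg hi.le hj.le
            nlinarith
          · rw [← hj]; simp
        · rw [← hi]; simp
      have hnormA2 : ‖A‖^2 ≤ d2 * (mup * mum) := by
        have h1 : ⟪A, A⟫ + ⟪A, B⟫ = 0 := by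
          rw [← inner_add_right, hAB, inner_zero_right]
        rw [← real_inner_self_eq_norm_sq]
        linarith [hABlow]
      have hPA : P^2 ≤ ‖A‖^2 := by
        rw [← hAc]; exact sc_coord_sq_le A c
      have hT2 : T^2 ≤ d2 := by
        have hmumu : mup * mum ≤ 1/4 := by nlinarith [sq_nonneg (mup - mum)]
        have : P^2 ≤ d2 * (1/4) := by
          calc P^2 ≤ ‖A‖^2 := hPA
          _ ≤ d2 * (mup * mum) := hnormA2
          _ ≤ d2 * (1/4) := by
              apply mul_le_mul_of_nonneg_left hmumu (le_of_lt hd2pos)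
        rw [hTsplit]
        nlinarith
      -- combine
      have hchain2 : 1 - d2 ≤ (n:ℝ) * (T * s1) := by
        have h1 : (1 - d2)/n ≤ T * s1 := le_trans hc hSc_le
        rw [div_le_iff₀ (by positivity : (0:ℝ) < (n:ℝ))] at h1
        linarith [h1]
      have hfinal : 1 - d2 ≤ (n:ℝ)^2 * d2 := by
        nlinarith [sq_nonneg (s1 - (n:ℝ) * T), hs1sq, hT2, hchain2, hTnonneg,
          hs1nonneg, mul_le_mul_of_nonneg_left hT2 (sq_nonneg (n:ℝ))]
      rw [div_le_iff₀ (by positivity)]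
      nlinarith [hfinal]
  -- conclusion
  refine ⟨‖x‖⁻¹ • x, ?_, ?_⟩
  · rw [norm_smul, norm_inv, norm_norm, inv_mul_cancel₀ (ne_of_gt hxnorm)]
  · intro i
    rw [real_inner_smul_right]
    have h1 := hKKT1 i
    have hxval : (Real.sqrt ((n:ℝ)^2+1))⁻¹ ≤ ‖x‖ := by
      have e1 : ‖x‖ = Real.sqrt d2 := by
        rw [hd2def, Real.sqrt_sq (norm_nonneg x)]
      have e2 : (Real.sqrt ((n:ℝ)^2+1))⁻¹ = Real.sqrt (1/((n:ℝ)^2+1)) := by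
        rw [one_div, Real.sqrt_inv]
      rw [e1, e2]
      exact Real.sqrt_le_sqrt hd2target
    have e3 : ‖x‖⁻¹ * d2 = ‖x‖ := by
      rw [hd2def, sq]
      rw [← mul_assoc, inv_mul_cancel₀ (ne_of_gt hxnorm), one_mul]
    have e4 : ‖x‖⁻¹ * d2 ≤ ‖x‖⁻¹ * ⟪u i, x⟫ :=
      mul_le_mul_of_nonneg_left h1 (inv_nonneg.mpr (norm_nonneg x))
    linarith

private lemma sc_exists_net (n : ℕ) {δ : ℝ} (hδ : 0 < δ) :
    ∃ W : Finset (EuclideanSpace ℝ (Fin n)),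
      (∀ w ∈ W, ‖w‖ = 1) ∧
      ∀ e : EuclideanSpace ℝ (Fin n), ‖e‖ = 1 → ∃ w ∈ W, ‖e - w‖ ≤ δ := by
  classical
  set Sph := Metric.sphere (0 : EuclideanSpace ℝ (Fin n)) 1 with hSph
  have hcomp : IsCompact Sph := isCompact_sphere 0 1
  have hcover : Sph ⊆ ⋃ p : Sph, Metric.ball (p : EuclideanSpace ℝ (Fin n)) δ := by
    intro e he
    rw [Set.mem_iUnion]
    exact ⟨⟨e, he⟩, Metric.mem_ball_self hδ⟩
  obtain ⟨s, hs⟩ := hcomp.elim_finite_subcover _ (fun p : Sph => Metric.isOpen_ball) hcover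
  refine ⟨s.image Subtype.val, ?_, ?_⟩
  · intro w hw
    obtain ⟨p, _hp, rfl⟩ := Finset.mem_image.mp hw
    exact mem_sphere_zero_iff_norm.mp p.2
  · intro e he
    have hesphere : e ∈ Sph := mem_sphere_zero_iff_norm.mpr he
    obtain ⟨p, hp, hball⟩ := Set.mem_iUnion₂.mp (hs hesphere)
    refine ⟨p.1, Finset.mem_image.mpr ⟨p, hp, rfl⟩, ?_⟩
    rw [Metric.mem_ball, dist_eq_norm] at hball
    exact le_of_lt hball

/-- The chaining estimate along one direction class. -/
private lemma sc_chain_bound {n k : ℕ} {δ D : ℝ} (hδ : 0 < δ) (hD0 : 0 ≤ D)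
    (P : Fin (k+1) → EuclideanSpace ℝ (Fin n)) (w : EuclideanSpace ℝ (Fin n))
    (hD : ∀ b b', dist (P b) (P b') ≤ D)
    (hNR : ∀ (a : Fin k) (b : Fin (k+1)), a.succ ≤ b →
      dist (P a.succ) (P b) ≤ dist (P a.castSucc) (P b)) :
    ∀ S : Finset (Fin k), ∀ hne : S.Nonempty,
      (∀ a ∈ S, ∀ b : Fin (k+1), a.castSucc < b →
        (δ/2) * ‖P b - P a.castSucc‖ ≤ ⟪P b - P a.castSucc, w⟫) →
      ∑ a ∈ S, dist (P a.castSucc) (P a.succ) ≤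
        (4/δ) * ⟪P ((S.max' hne).castSucc) - P ((S.min' hne).castSucc), w⟫ + D := by
  classical
  intro S
  induction S using Finset.strongInductionOn with
  | _ S IH =>
    intro hne hcone
    set m := S.min' hne with hm
    have hmS : m ∈ S := S.min'_mem hne
    rcases (S.erase m).eq_empty_or_nonempty with he | hne'
    · -- S = {m}
      have hSm : ∀ a ∈ S, a = m := by
        intro a ha
        by_contra hcon
        have : a ∈ S.erase m := Finset.mem_erase.mpr ⟨hcon, ha⟩
        rw [he] at this
        exact absurd this (Finset.notMem_empty a)
      have hmax : S.max' hne = m := hSm _ (S.max'_mem hne)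
      have hsum : ∑ a ∈ S, dist (P a.castSucc) (P a.succ)
          = dist (P m.castSucc) (P m.succ) :=
        Finset.sum_eq_single_of_mem m hmS (fun b hb hbne => absurd (hSm b hb) hbne)
      rw [hsum, hmax, sub_self, inner_zero_left, mul_zero, zero_add]
      exact hD _ _
    · set S' := S.erase m with hS'
      have hssub : S' ⊂ S := Finset.erase_ssubset hmS
      set m' := S'.min' hne' with hm'
      have hm'mem := S'.min'_mem hne'
      have hm'ne : m' ≠ m := (Finset.mem_erase.mp hm'mem).1
      have hm'S : m' ∈ S := (Finset.mem_erase.mp hm'mem).2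
      have hmm' : m < m' := lt_of_le_of_ne (S.min'_le m' hm'S) (Ne.symm hm'ne)
      have hmaxS' : S'.max' hne' = S.max' hne := by
        apply le_antisymm
        · exact Finset.max'_le _ _ _ (fun a ha => S.le_max' a (Finset.mem_erase.mp ha).2)
        · apply Finset.le_max'
          refine Finset.mem_erase.mpr ⟨?_, S.max'_mem hne⟩
          intro hcontra
          have h1 : m' ≤ S.max' hne := S.le_max' m' hm'S
          rw [hcontra] at h1
          exact absurd (lt_of_lt_of_le hmm' h1) (lt_irrefl m)
      have hIH := IH S' hssub hne'
        (fun a ha b hb => hcone a (Finset.mem_erase.mp ha).2 b hb)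
      rw [hmaxS'] at hIH
      -- the link estimate
      have hsucc_le : m.succ ≤ m'.castSucc := by
        rw [Fin.le_def]
        simp only [Fin.val_succ, Fin.coe_castSucc]
        exact Fin.lt_def.mp hmm'
      have hlink : dist (P m.castSucc) (P m.succ)
          ≤ (4/δ) * ⟪P (m'.castSucc) - P (m.castSucc), w⟫ := by
        have tri : dist (P m.castSucc) (P m.succ)
            ≤ dist (P m.castSucc) (P m'.castSucc) + dist (P m'.castSucc) (P m.succ) :=
          dist_triangle _ _ _
        have nr : dist (P m.succ) (P m'.castSucc) ≤ dist (P m.castSucc) (P m'.castSucc) :=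
          hNR m m'.castSucc hsucc_le
        rw [dist_comm (P m'.castSucc) (P m.succ)] at tri
        have t1 : dist (P m.castSucc) (P m.succ)
            ≤ 2 * dist (P m.castSucc) (P m'.castSucc) := by linarith
        have t3 : dist (P m.castSucc) (P m'.castSucc) = ‖P m'.castSucc - P m.castSucc‖ := by
          rw [dist_comm, dist_eq_norm]
        rw [t3] at t1
        have t2 : (δ/2) * ‖P m'.castSucc - P m.castSucc‖
            ≤ ⟪P m'.castSucc - P m.castSucc, w⟫ :=
          hcone m hmS m'.castSucc (Fin.castSucc_lt_castSucc_iff.mpr hmm')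
        have t4 : (4/δ) * ((δ/2) * ‖P m'.castSucc - P m.castSucc‖)
            ≤ (4/δ) * ⟪P m'.castSucc - P m.castSucc, w⟫ :=
          mul_le_mul_of_nonneg_left t2 (by positivity)
        have t5 : (4/δ) * ((δ/2) * ‖P m'.castSucc - P m.castSucc‖)
            = 2 * ‖P m'.castSucc - P m.castSucc‖ := by
          field_simp
          ring
        rw [t5] at t4
        linarith
      have hsplit : ∑ a ∈ S, dist (P a.castSucc) (P a.succ)
          = dist (P m.castSucc) (P m.succ) + ∑ a ∈ S', dist (P a.castSucc) (P a.succ) := by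
        rw [hS']
        exact (Finset.add_sum_erase S _ hmS).symm
      have innsplit : ⟪P ((S.max' hne).castSucc) - P (m'.castSucc), w⟫
          + ⟪P (m'.castSucc) - P (m.castSucc), w⟫
          = ⟪P ((S.max' hne).castSucc) - P (m.castSucc), w⟫ := by
        rw [← inner_add_left]
        congr 1
        abel
      rw [hsplit, hm]
      calc dist (P (S.min' hne).castSucc) (P (S.min' hne).succ)
            + ∑ a ∈ S', dist (P a.castSucc) (P a.succ)
          ≤ (4/δ) * ⟪P (m'.castSucc) - P ((S.min' hne).castSucc), w⟫
            + ((4/δ) * ⟪P ((S.max' hne).castSucc) - P (m'.castSucc), w⟫ + D) := by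
            apply add_le_add _ hIH
            rw [← hm]
            exact hlink
      _ = (4/δ) * (⟪P ((S.max' hne).castSucc) - P (m'.castSucc), w⟫
            + ⟪P (m'.castSucc) - P ((S.min' hne).castSucc), w⟫) + D := by ring
      _ = (4/δ) * ⟪P ((S.max' hne).castSucc) - P ((S.min' hne).castSucc), w⟫ + D := by
            rw [← hm] at *
            rw [innsplit]

end SCAux

/-- Rectifiability in `ℝⁿ`: there is a constant `C` depending only on `n` such that every
bounded self-contracted curve `ξ : [0,ℓ) → ℝⁿ` has length at most `C · diam(ξ([0,ℓ)))`. -/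
theorem selfContracted_rectifiable_euclidean (n : ℕ) :
    ∃ C : ℝ, ∀ (ℓ : ℝ) (ξ : ℝ → EuclideanSpace ℝ (Fin n)),
      (∀ t₁ t₂ t₃ : ℝ, 0 ≤ t₁ → t₁ ≤ t₂ → t₂ ≤ t₃ → t₃ < ℓ →
        dist (ξ t₂) (ξ t₃) ≤ dist (ξ t₁) (ξ t₃)) →
      Bornology.IsBounded (ξ '' Set.Ico 0 ℓ) →
      ∀ (k : ℕ) (t : Fin (k + 1) → ℝ), t 0 = 0 → StrictMono t → t (Fin.last k) < ℓ →
        ∑ i : Fin k, dist (ξ (t i.castSucc)) (ξ (t i.succ)) ≤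
          C * Metric.diam (ξ '' Set.Ico 0 ℓ) := by
  classical
  set δ : ℝ := (Real.sqrt ((n:ℝ)^2 + 1))⁻¹ with hδdef
  have hδ : 0 < δ := by
    rw [hδdef]
    have : (0:ℝ) < Real.sqrt ((n:ℝ)^2 + 1) := Real.sqrt_pos.mpr (by positivity)
    positivity
  obtain ⟨W, hWunit, hWnet⟩ := sc_exists_net n (δ := δ/2) (by positivity)
  refine ⟨(W.card : ℝ) * (4/δ + 1), ?_⟩
  intro ℓ ξ hSC hbdd k t ht0 htmono htlast
  set D := Metric.diam (ξ '' Set.Ico 0 ℓ) with hDdef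
  have hD0 : 0 ≤ D := Metric.diam_nonneg
  set P : Fin (k+1) → EuclideanSpace ℝ (Fin n) := fun b => ξ (t b) with hPdef
  have hmemIm : ∀ b : Fin (k+1), ξ (t b) ∈ ξ '' Set.Ico 0 ℓ := by
    intro b
    refine ⟨t b, ⟨?_, ?_⟩, rfl⟩
    · rw [← ht0]; exact htmono.monotone (Fin.zero_le b)
    · exact lt_of_le_of_lt (htmono.monotone (Fin.le_last b)) htlast
  have hD : ∀ b b' : Fin (k+1), dist (P b) (P b') ≤ D :=
    fun b b' => Metric.dist_le_diam_of_mem hbdd (hmemIm b) (hmemIm b')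
  have hSC3 : ∀ a b c : Fin (k+1), a ≤ b → b ≤ c → dist (P b) (P c) ≤ dist (P a) (P c) := by
    intro a b c hab hbc
    apply hSC (t a) (t b) (t c)
    · rw [← ht0]; exact htmono.monotone (Fin.zero_le a)
    · exact htmono.monotone hab
    · exact htmono.monotone hbc
    · exact lt_of_le_of_lt (htmono.monotone (Fin.le_last c)) htlast
  have hNR : ∀ (a : Fin k) (b : Fin (k+1)), a.succ ≤ b →
      dist (P a.succ) (P b) ≤ dist (P a.castSucc) (P b) :=
    fun a b h => hSC3 a.castSucc a.succ b (le_of_lt (Fin.castSucc_lt_succ : a.castSucc < a.succ)) h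
  -- cone at each nondegenerate step
  have key : ∀ a : Fin k, P a.succ ≠ P a.castSucc →
      ∃ w ∈ W, ∀ b : Fin (k+1), a.castSucc < b →
        (δ/2) * ‖P b - P a.castSucc‖ ≤ ⟪P b - P a.castSucc, w⟫ := by
    intro a ha
    haveI hne : Nonempty {b : Fin (k+1) // a.castSucc < b ∧ P b ≠ P a.castSucc} :=
      ⟨⟨a.succ, (Fin.castSucc_lt_succ : a.castSucc < a.succ), ha⟩⟩
    set u : {b : Fin (k+1) // a.castSucc < b ∧ P b ≠ P a.castSucc}
        → EuclideanSpace ℝ (Fin n) :=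
      fun b => ‖P b.1 - P a.castSucc‖⁻¹ • (P b.1 - P a.castSucc) with hu_def
    have hu : ∀ i, ‖u i‖ = 1 := by
      intro i
      have hne0 : P i.1 - P a.castSucc ≠ 0 := sub_ne_zero.mpr i.2.2
      have hpos : 0 < ‖P i.1 - P a.castSucc‖ := norm_pos_iff.mpr hne0
      rw [hu_def]
      simp only
      rw [norm_smul, norm_inv, norm_norm, inv_mul_cancel₀ (ne_of_gt hpos)]
    have hpair : ∀ i j, 0 ≤ ⟪u i, u j⟫ := by
      have main : ∀ (b b' : {b : Fin (k+1) // a.castSucc < b ∧ P b ≠ P a.castSucc}),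
          b.1 ≤ b'.1 → 0 ≤ ⟪P b.1 - P a.castSucc, P b'.1 - P a.castSucc⟫ := by
        intro b b' hbb
        exact sc_inner_nonneg (hSC3 a.castSucc b.1 b'.1 (le_of_lt b.2.1) hbb)
      intro i j
      have hip : ⟪u i, u j⟫ = ‖P i.1 - P a.castSucc‖⁻¹ * (‖P j.1 - P a.castSucc‖⁻¹
          * ⟪P i.1 - P a.castSucc, P j.1 - P a.castSucc⟫) := by
        rw [hu_def]
        simp only
        rw [real_inner_smul_left, real_inner_smul_right]
      rcases le_total i.1 j.1 with h | h
      · rw [hip]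
        have := main i j h
        positivity
      · rw [hip, real_inner_comm]
        have := main j i h
        positivity
    obtain ⟨e, he1, he2⟩ := sc_center u hu hpair
    obtain ⟨w, hwW, hwe⟩ := hWnet e he1
    refine ⟨w, hwW, ?_⟩
    intro b hb
    by_cases hPb : P b = P a.castSucc
    · rw [hPb, sub_self, inner_zero_left, norm_zero, mul_zero]
    · set i : {b : Fin (k+1) // a.castSucc < b ∧ P b ≠ P a.castSucc} := ⟨b, hb, hPb⟩ with hi
      have h1 : δ ≤ ⟪u i, e⟫ := by rw [hδdef]; exact he2 i
      have h2 : |⟪u i, e - w⟫| ≤ δ/2 := by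
        calc |⟪u i, e - w⟫| ≤ ‖u i‖ * ‖e - w‖ := abs_real_inner_le_norm _ _
        _ = ‖e - w‖ := by rw [hu i, one_mul]
        _ ≤ δ/2 := hwe
      have h3 : δ/2 ≤ ⟪u i, w⟫ := by
        have hsplit : ⟪u i, w⟫ = ⟪u i, e⟫ - ⟪u i, e - w⟫ := by
          rw [inner_sub_right]; ring
        rw [hsplit]
        have := abs_le.mp h2
        linarith
      have hnorm_pos : 0 < ‖P b - P a.castSucc‖ :=
        norm_pos_iff.mpr (sub_ne_zero.mpr hPb)
      have hscale : ⟪P b - P a.castSucc, w⟫ = ‖P b - P a.castSucc‖ * ⟪u i, w⟫ := by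
        have hui : u i = ‖P b - P a.castSucc‖⁻¹ • (P b - P a.castSucc) := by
          rw [hu_def]
        rw [hui, real_inner_smul_left, ← mul_assoc, mul_inv_cancel₀ (ne_of_gt hnorm_pos),
          one_mul]
      rw [hscale]
      calc (δ/2) * ‖P b - P a.castSucc‖ ≤ ⟪u i, w⟫ * ‖P b - P a.castSucc‖ :=
            mul_le_mul_of_nonneg_right h3 (norm_nonneg _)
      _ = ‖P b - P a.castSucc‖ * ⟪u i, w⟫ := by ring
  -- choose net directions for the nondegenerate steps
  have key' : ∀ a : Fin k, ∃ w : EuclideanSpace ℝ (Fin n),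
      P a.succ ≠ P a.castSucc → (w ∈ W ∧ ∀ b : Fin (k+1), a.castSucc < b →
        (δ/2) * ‖P b - P a.castSucc‖ ≤ ⟪P b - P a.castSucc, w⟫) := by
    intro a
    by_cases h : P a.succ = P a.castSucc
    · exact ⟨0, fun hc => absurd h hc⟩
    · obtain ⟨w, h1, h2⟩ := key a h
      exact ⟨w, fun _ => ⟨h1, h2⟩⟩
  choose g hg using key'
  set S₀ : Finset (Fin k) := Finset.univ.filter (fun a => P a.succ ≠ P a.castSucc) with hS₀
  have hmaps : ∀ a ∈ S₀, g a ∈ W := by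
    intro a ha
    rw [hS₀, Finset.mem_filter] at ha
    exact (hg a ha.2).1
  have hgoal : ∑ i : Fin k, dist (ξ (t i.castSucc)) (ξ (t i.succ))
      = ∑ a ∈ S₀, dist (P a.castSucc) (P a.succ) := by
    rw [hS₀]
    refine (Finset.sum_filter_of_ne ?_).symm
    intro a _ hne2 hcon
    apply hne2
    show dist (P a.castSucc) (P a.succ) = 0
    rw [hcon, dist_self]
  have hsum2 := Finset.sum_fiberwise_of_maps_to hmaps
    (fun a => dist (P a.castSucc) (P a.succ))
  have hfiber : ∀ w ∈ W, ∑ a ∈ S₀.filter (fun a => g a = w),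
      dist (P a.castSucc) (P a.succ) ≤ (4/δ) * D + D := by
    intro w hw
    rcases (S₀.filter (fun a => g a = w)).eq_empty_or_nonempty with he | hne
    · rw [he, Finset.sum_empty]
      positivity
    · have hcone : ∀ a ∈ S₀.filter (fun a => g a = w), ∀ b : Fin (k+1), a.castSucc < b →
          (δ/2) * ‖P b - P a.castSucc‖ ≤ ⟪P b - P a.castSucc, w⟫ := by
        intro a ha b hb
        rw [Finset.mem_filter] at ha
        obtain ⟨ha0, hgw⟩ := ha
        rw [hS₀, Finset.mem_filter] at ha0
        have := (hg a ha0.2).2 b hb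
        rw [← hgw]
        exact this
      have hchain := sc_chain_bound hδ hD0 P w hD hNR _ hne hcone
      refine le_trans hchain ?_
      have hipD : ⟪P ((((S₀.filter (fun a => g a = w))).max' hne).castSucc)
          - P ((((S₀.filter (fun a => g a = w))).min' hne).castSucc), w⟫ ≤ D := by
        calc ⟪P ((((S₀.filter (fun a => g a = w))).max' hne).castSucc)
            - P ((((S₀.filter (fun a => g a = w))).min' hne).castSucc), w⟫
            ≤ |⟪P ((((S₀.filter (fun a => g a = w))).max' hne).castSucc)
              - P ((((S₀.filter (fun a => g a = w))).min' hne).castSucc), w⟫| := le_abs_self _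
        _ ≤ ‖P ((((S₀.filter (fun a => g a = w))).max' hne).castSucc)
              - P ((((S₀.filter (fun a => g a = w))).min' hne).castSucc)‖ * ‖w‖ :=
            abs_real_inner_le_norm _ _
        _ = ‖P ((((S₀.filter (fun a => g a = w))).max' hne).castSucc)
              - P ((((S₀.filter (fun a => g a = w))).min' hne).castSucc)‖ := by
            rw [hWunit w hw, mul_one]
        _ = dist (P ((((S₀.filter (fun a => g a = w))).max' hne).castSucc))
              (P ((((S₀.filter (fun a => g a = w))).min' hne).castSucc)) :=
            (dist_eq_norm _ _).symm
        _ ≤ D := hD _ _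
      have h4δ : (0:ℝ) ≤ 4/δ := by positivity
      nlinarith [hipD]
  rw [hgoal, ← hsum2]
  calc ∑ w ∈ W, ∑ a ∈ S₀.filter (fun a => g a = w), dist (P a.castSucc) (P a.succ)
      ≤ ∑ _w ∈ W, ((4/δ) * D + D) := Finset.sum_le_sum hfiber
  _ = (W.card : ℝ) * ((4/δ) * D + D) := by
      rw [Finset.sum_const, nsmul_eq_mul]
  _ = (W.card : ℝ) * (4/δ + 1) * D := by ring
end

section
/- Let ξ : [0,ℓ) → ℝ be a self-contracted curve in the real line with bounded image. Then L(ξ) ≤ 3 · diam(ξ([0,ℓ))). -/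
set_option maxHeartbeats 1000000 in
/-- A bounded self-contracted curve in the real line has length at most
`3 · diam(ξ([0,ℓ)))`. -/
theorem selfContracted_rectifiable_real
    {ℓ : ℝ} (ξ : ℝ → ℝ)
    (hsc : ∀ t₁ t₂ t₃ : ℝ, 0 ≤ t₁ → t₁ ≤ t₂ → t₂ ≤ t₃ → t₃ < ℓ →
      dist (ξ t₂) (ξ t₃) ≤ dist (ξ t₁) (ξ t₃))
    (hbdd : Bornology.IsBounded (ξ '' Set.Ico 0 ℓ)) :
    ∀ (k : ℕ) (t : Fin (k + 1) → ℝ), t 0 = 0 → StrictMono t → t (Fin.last k) < ℓ →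
      ∑ i : Fin k, dist (ξ (t i.castSucc)) (ξ (t i.succ)) ≤
        3 * Metric.diam (ξ '' Set.Ico 0 ℓ) := by
  intro k t ht0 hmono hlast
  set D := Metric.diam (ξ '' Set.Ico 0 ℓ) with hD
  set x : Fin (k+1) → ℝ := fun i => ξ (t i) with hx
  have htmem : ∀ i : Fin (k+1), t i ∈ Set.Ico (0:ℝ) ℓ := by
    intro i
    constructor
    · rw [← ht0]; exact hmono.monotone (Fin.zero_le i)
    · exact lt_of_le_of_lt (hmono.monotone (Fin.le_last i)) hlast
  have hmem : ∀ i, x i ∈ ξ '' Set.Ico 0 ℓ := fun i => ⟨t i, htmem i, rfl⟩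
  have hsc' : ∀ a b c : Fin (k+1), a ≤ b → b ≤ c →
      dist (x b) (x c) ≤ dist (x a) (x c) := by
    intro a b c hab hbc
    exact hsc (t a) (t b) (t c) (htmem a).1 (hmono.monotone hab)
      (hmono.monotone hbc) (htmem c).2
  have hne : ∀ i : Fin (k+1), (Finset.Ici i).Nonempty :=
    fun i => ⟨i, Finset.mem_Ici.mpr le_rfl⟩
  set M : Fin (k+1) → ℝ := fun i => (Finset.Ici i).sup' (hne i) x with hM
  set m : Fin (k+1) → ℝ := fun i => (Finset.Ici i).inf' (hne i) x with hm
  have hmmono : ∀ i j : Fin (k+1), i ≤ j → m i ≤ m j := by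
    intro i j hij
    apply Finset.le_inf'
    intro b hb
    exact Finset.inf'_le x (Finset.mem_Ici.mpr (le_trans hij (Finset.mem_Ici.mp hb)))
  have hMmono : ∀ i j : Fin (k+1), i ≤ j → M j ≤ M i := by
    intro i j hij
    apply Finset.sup'_le
    intro b hb
    exact Finset.le_sup' x (Finset.mem_Ici.mpr (le_trans hij (Finset.mem_Ici.mp hb)))
  have key : ∀ i : Fin k, dist (x i.castSucc) (x i.succ) ≤
      (2 * m i.succ - 2 * M i.succ) - (2 * m i.castSucc - 2 * M i.castSucc) := by
    intro i
    have hle : i.castSucc ≤ i.succ := (Fin.castSucc_lt_succ : i.castSucc < i.succ).le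
    have hm1 : m i.castSucc ≤ m i.succ := hmmono _ _ hle
    have hM1 : M i.succ ≤ M i.castSucc := hMmono _ _ hle
    have hma : m i.castSucc ≤ x i.castSucc := Finset.inf'_le x (Finset.mem_Ici.mpr le_rfl)
    have hMa : x i.castSucc ≤ M i.castSucc := Finset.le_sup' x (Finset.mem_Ici.mpr le_rfl)
    rcases lt_trichotomy (x i.castSucc) (x i.succ) with hab | hab | hab
    · -- rightward move: the suffix minimum increases by at least half the step
      have hmid : (x i.castSucc + x i.succ) / 2 ≤ m i.succ := by
        apply Finset.le_inf'
        intro j hj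
        have hj' : i.succ ≤ j := Finset.mem_Ici.mp hj
        have h1 := hsc' i.castSucc i.succ j hle hj'
        rw [Real.dist_eq, Real.dist_eq] at h1
        have h2 := mul_self_le_mul_self (abs_nonneg _) h1
        rw [abs_mul_abs_self, abs_mul_abs_self] at h2
        nlinarith [h2, hab]
      rw [Real.dist_eq, abs_of_nonpos (by linarith)]
      linarith
    · rw [hab, dist_self]
      linarith
    · -- leftward move: the suffix maximum decreases by at least half the step
      have hmid : M i.succ ≤ (x i.castSucc + x i.succ) / 2 := by
        apply Finset.sup'_le
        intro j hj
        have hj' : i.succ ≤ j := Finset.mem_Ici.mp hj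
        have h1 := hsc' i.castSucc i.succ j hle hj'
        rw [Real.dist_eq, Real.dist_eq] at h1
        have h2 := mul_self_le_mul_self (abs_nonneg _) h1
        rw [abs_mul_abs_self, abs_mul_abs_self] at h2
        nlinarith [h2, hab]
      rw [Real.dist_eq, abs_of_nonneg (by linarith)]
      linarith
  -- telescoping
  set f : Fin (k+1) → ℝ := fun j => 2 * m j - 2 * M j with hf
  set g : ℕ → ℝ := fun n => f ⟨min n k, Nat.lt_succ_of_le (min_le_right n k)⟩ with hg
  have tele : ∑ i : Fin k, ((2 * m i.succ - 2 * M i.succ) -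
      (2 * m i.castSucc - 2 * M i.castSucc)) = f (Fin.last k) - f 0 := by
    have step : ∀ i : Fin k, ((2 * m i.succ - 2 * M i.succ) -
        (2 * m i.castSucc - 2 * M i.castSucc)) = g (i.val + 1) - g i.val := by
      intro i
      have h1 : (⟨min (i.val + 1) k, Nat.lt_succ_of_le (min_le_right _ k)⟩ : Fin (k+1))
          = i.succ := by
        have hik := i.isLt
        apply Fin.ext
        simp only [Fin.val_succ]
        omega
      have h2 : (⟨min i.val k, Nat.lt_succ_of_le (min_le_right _ k)⟩ : Fin (k+1))
          = i.castSucc := by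
        have hik := i.isLt
        apply Fin.ext
        simp only [Fin.coe_castSucc]
        omega
      rw [hg]
      simp only [h1, h2, hf]
    rw [Finset.sum_congr rfl (fun i _ => step i)]
    rw [Fin.sum_univ_eq_sum_range (fun n => g (n + 1) - g n) k]
    rw [Finset.sum_range_sub g k]
    have hkk : (⟨min k k, Nat.lt_succ_of_le (min_le_right k k)⟩ : Fin (k+1))
        = Fin.last k := Fin.ext (by simp [Fin.last])
    have h00 : (⟨min 0 k, Nat.lt_succ_of_le (min_le_right 0 k)⟩ : Fin (k+1))
        = 0 := Fin.ext (by simp)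
    rw [hg]
    simp only [hkk, h00]
  have hsum : ∑ i : Fin k, dist (x i.castSucc) (x i.succ) ≤ f (Fin.last k) - f 0 := by
    calc ∑ i : Fin k, dist (x i.castSucc) (x i.succ)
        ≤ ∑ i : Fin k, ((2 * m i.succ - 2 * M i.succ) -
            (2 * m i.castSucc - 2 * M i.castSucc)) :=
          Finset.sum_le_sum (fun i _ => key i)
      _ = f (Fin.last k) - f 0 := tele
  have hlastle : m (Fin.last k) ≤ M (Fin.last k) := by
    calc m (Fin.last k) ≤ x (Fin.last k) := Finset.inf'_le x (Finset.mem_Ici.mpr le_rfl)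
      _ ≤ M (Fin.last k) := Finset.le_sup' x (Finset.mem_Ici.mpr le_rfl)
  have hdiam : M 0 - m 0 ≤ D := by
    obtain ⟨j, _, hjM⟩ := Finset.exists_mem_eq_sup' (hne 0) x
    obtain ⟨j', _, hjm⟩ := Finset.exists_mem_eq_inf' (hne 0) x
    have hd := Metric.dist_le_diam_of_mem hbdd (hmem j) (hmem j')
    rw [Real.dist_eq] at hd
    have habs : x j - x j' ≤ |x j - x j'| := le_abs_self _
    rw [hM, hm]
    simp only []
    rw [← hjM, ← hjm] at *
    linarith [hjM ▸ habs]
  have hD0 : 0 ≤ D := Metric.diam_nonneg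
  have hfinal : ∑ i : Fin k, dist (x i.castSucc) (x i.succ) ≤ 3 * D := by
    have : f (Fin.last k) - f 0 ≤ 2 * D := by
      rw [hf]
      simp only []
      linarith
    linarith
  exact hfinal
end

section
/- Let (X,d) be a complete CAT(0) space and f : X → ℝ a lower semi-continuous quasi-convex function bounded below. Then for every x ∈ X and τ > 0, the set J^f_τ(x) of minimizers of z ↦ f(z) + d²(x,z)/(2τ) is nonempty. -/
/-- In a complete CAT(0) space, the Moreau–Yosida resolvent set `J^f_τ(x)` of a lower
semi-continuous quasi-convex function bounded below is nonempty. -/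
theorem resolvent_nonempty_of_quasiconvex
    {X : Type*} [MetricSpace X] [CompleteSpace X]
    (γ : X → X → ℝ → X)
    (hγ0 : ∀ x y, γ x y 0 = x) (hγ1 : ∀ x y, γ x y 1 = y)
    (hgeo : ∀ x y, ∀ s ∈ Set.Icc (0:ℝ) 1, ∀ t ∈ Set.Icc (0:ℝ) 1,
      dist (γ x y s) (γ x y t) = |s - t| * dist x y)
    (hcat : ∀ x y z, ∀ s ∈ Set.Icc (0:ℝ) 1,
      dist x (γ y z s) ^ 2 ≤
        (1 - s) * dist x y ^ 2 + s * dist x z ^ 2 - (1 - s) * s * dist y z ^ 2)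
    (f : X → ℝ) (hlsc : LowerSemicontinuous f) (hbdd : BddBelow (Set.range f))
    (hqc : ∀ x y, ∀ s ∈ Set.Ioo (0:ℝ) 1, f (γ x y s) ≤ max (f x) (f y))
    (x : X) (τ : ℝ) (hτ : 0 < τ) :
    ∃ z : X, ∀ w : X, f z + dist x z ^ 2 / (2 * τ) ≤ f w + dist x w ^ 2 / (2 * τ) := by
  classical
  obtain ⟨c, hc⟩ := hbdd
  have hc' : ∀ w, c ≤ f w := fun w => hc ⟨w, rfl⟩
  set F : X → ℝ := fun z => f z + dist x z ^ 2 / (2 * τ) with hF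
  have h2τ : (0:ℝ) < 2 * τ := by linarith
  have hFlb : ∀ w, c ≤ F w := by
    intro w
    have h1 : 0 ≤ dist x w ^ 2 / (2*τ) := div_nonneg (sq_nonneg _) h2τ.le
    have h2 := hc' w
    simp only [hF]; linarith
  have hFbdd : BddBelow (Set.range F) := ⟨c, by rintro a ⟨w, rfl⟩; exact hFlb w⟩
  set l : ℝ := ⨅ w, F w with hl
  have hlle : ∀ w, l ≤ F w := fun w => ciInf_le hFbdd w
  set ε : ℕ → ℝ := fun n => 1 / ((n:ℝ)+1) with hε
  have hεpos : ∀ n, 0 < ε n := by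
    intro n; simp only [hε]; positivity
  have hεanti : ∀ {m n : ℕ}, m ≤ n → ε n ≤ ε m := by
    intro m n hmn
    simp only [hε]
    have h : (m:ℝ) ≤ n := by exact_mod_cast hmn
    apply one_div_le_one_div_of_le (by positivity)
    linarith
  have hεle1 : ∀ n, ε n ≤ 1 := by
    intro n
    simp only [hε]
    rw [div_le_one (by positivity)]
    linarith [Nat.cast_nonneg (α := ℝ) n]
  have hεtendsto : Filter.Tendsto ε Filter.atTop (nhds 0) :=
    tendsto_one_div_add_atTop_nhds_zero_nat
  set S : ℕ → Set ℝ := fun n => {a | ∃ w, F w ≤ l + ε n ∧ dist x w ^ 2 = a} with hS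
  haveI : Nonempty X := ⟨x⟩
  have hSne : ∀ n, (S n).Nonempty := by
    intro n
    have h1 : l < l + ε n := by linarith [hεpos n]
    obtain ⟨w, hw⟩ := exists_lt_of_ciInf_lt (hl ▸ h1 : ⨅ w, F w < l + ε n)
    exact ⟨dist x w ^ 2, w, hw.le, rfl⟩
  have hSbd : ∀ n, BddBelow (S n) := by
    intro n
    refine ⟨0, ?_⟩
    rintro a ⟨w, -, rfl⟩
    exact sq_nonneg _
  set q : ℕ → ℝ := fun n => sInf (S n) with hq
  have hqmono : Monotone q := by
    intro m n hmn
    refine csInf_le_csInf (hSbd m) (hSne n) ?_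
    rintro a ⟨w, hw, rfl⟩
    exact ⟨w, hw.trans (by linarith [hεanti hmn]), rfl⟩
  have hex : ∀ n, ∃ w, F w ≤ l + ε n ∧ dist x w ^ 2 < q n + ε n := by
    intro n
    obtain ⟨a, ⟨w, hw1, hw2⟩, ha⟩ := Real.lt_sInf_add_pos (hSne n) (hεpos n)
    exact ⟨w, hw1, hw2 ▸ ha⟩
  choose z hz1 hz2 using hex
  -- q is bounded above
  have hdistb : ∀ n, dist x (z n) ^ 2 ≤ 2*τ*(l + 1 - c) := by
    intro n
    have h1 := hz1 n
    have h2 := hc' (z n)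
    have h3 := hεle1 n
    simp only [hF] at h1
    have h4 : dist x (z n) ^ 2 / (2*τ) ≤ l + 1 - c := by linarith
    have h5 := mul_le_mul_of_nonneg_right h4 h2τ.le
    rw [div_mul_cancel₀ _ (ne_of_gt h2τ)] at h5
    linarith
  have hqub : ∀ n, q n ≤ 2*τ*(l + 1 - c) := by
    intro n
    exact le_trans (csInf_le (hSbd n) ⟨z n, hz1 n, rfl⟩) (hdistb n)
  have hqbddAbove : BddAbove (Set.range q) := ⟨2*τ*(l+1-c), by rintro a ⟨n, rfl⟩; exact hqub n⟩
  set r₀ : ℝ := ⨆ n, q n with hr₀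
  have hqler : ∀ n, q n ≤ r₀ := fun n => le_ciSup hqbddAbove n
  have hqtendsto : Filter.Tendsto q Filter.atTop (nhds r₀) :=
    tendsto_atTop_ciSup hqmono hqbddAbove
  set b : ℕ → ℝ := fun n => 2*(r₀ - q n) + (4 + 8*τ)*ε n with hb
  -- key inequality
  have key : ∀ m n : ℕ, m ≤ n → dist (z m) (z n) ^ 2 ≤ b m := by
    intro m n hmn
    set p := γ (z m) (z n) (1/2) with hp
    have hcat' := hcat x (z m) (z n) (1/2) ⟨by norm_num, by norm_num⟩
    have hqc' := hqc (z m) (z n) (1/2) ⟨by norm_num, by norm_num⟩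
    rw [← hp] at hcat' hqc'
    have hlp := hlle p
    simp only [hF] at hlp
    have hdm : dist x (z m) ^ 2 < q m + ε m := hz2 m
    have hdn : dist x (z n) ^ 2 < q n + ε n := hz2 n
    have hdn' : dist x (z n) ^ 2 < r₀ + ε m := lt_of_lt_of_le hdn (by linarith [hqler n, hεanti hmn])
    -- case on which endpoint attains the max of f
    have hmaxcase : ∃ j, (f p ≤ f (z j)) ∧ q m ≤ dist x (z j) ^ 2 ∧ F (z j) ≤ l + ε m := by
      rcases le_total (f (z m)) (f (z n)) with h | h
      · refine ⟨n, ?_, ?_, ?_⟩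
        · exact hqc'.trans (by simp [h])
        · exact csInf_le (hSbd m) ⟨z n, (hz1 n).trans (by linarith [hεanti hmn]), rfl⟩
        · exact (hz1 n).trans (by linarith [hεanti hmn])
      · refine ⟨m, ?_, ?_, ?_⟩
        · exact hqc'.trans (by simp [h])
        · exact csInf_le (hSbd m) ⟨z m, hz1 m, rfl⟩
        · exact hz1 m
    obtain ⟨j, hj1, hj2, hj3⟩ := hmaxcase
    simp only [hF] at hj3
    -- from l ≤ F p, f p ≤ f (z j), F (z j) ≤ l + ε m :
    -- dist x (z j)^2 / (2τ) ≤ dist x p ^2 / (2τ) + ε m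
    have hdiv : dist x (z j) ^ 2 / (2*τ) ≤ dist x p ^ 2 / (2*τ) + ε m := by linarith
    have hmul := mul_le_mul_of_nonneg_right hdiv h2τ.le
    rw [div_mul_cancel₀ _ (ne_of_gt h2τ), add_mul, div_mul_cancel₀ _ (ne_of_gt h2τ)] at hmul
    -- assemble
    simp only [hb]
    linarith [hj2, hdm, hdn', hcat', hmul, hεpos m]
  have hbtendsto : Filter.Tendsto b Filter.atTop (nhds 0) := by
    have h1 : Filter.Tendsto (fun n => 2*(r₀ - q n)) Filter.atTop (nhds (2*(r₀ - r₀))) :=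
      (Filter.Tendsto.const_mul 2 (tendsto_const_nhds.sub hqtendsto))
    have h2 : Filter.Tendsto (fun n => (4 + 8*τ)*ε n) Filter.atTop (nhds ((4+8*τ)*0)) :=
      hεtendsto.const_mul _
    have := h1.add h2
    simpa [hb] using this
  have hcauchy : CauchySeq z := by
    rw [Metric.cauchySeq_iff]
    intro δ hδ
    have hev : ∀ᶠ n in Filter.atTop, b n < δ^2 :=
      hbtendsto.eventually (gt_mem_nhds (by positivity))
    obtain ⟨N, hN⟩ := Filter.eventually_atTop.mp hev
    refine ⟨N, fun m hm n hn => ?_⟩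
    rcases le_total m n with h | h
    · have := (key m n h).trans_lt (hN m hm)
      nlinarith [dist_nonneg (x := z m) (y := z n)]
    · have := (key n m h).trans_lt (hN n hn)
      rw [dist_comm] at this
      nlinarith [dist_nonneg (x := z m) (y := z n)]
  obtain ⟨y, hy⟩ := cauchySeq_tendsto_of_complete hcauchy
  have hgc : Continuous (fun w => dist x w ^ 2 / (2*τ)) := by
    exact ((continuous_const.dist continuous_id).pow 2).div_const _
  have hFlsc : LowerSemicontinuous F := hlsc.add hgc.lowerSemicontinuous
  have hFy : F y ≤ l := by
    by_contra h
    push_neg at h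
    obtain ⟨t, ht1, ht2⟩ := exists_between h
    have h1 : ∀ᶠ n in Filter.atTop, t < F (z n) := hy.eventually (hFlsc y t ht2)
    have h2 : ∀ᶠ n in Filter.atTop, F (z n) < t := by
      have h3 : Filter.Tendsto (fun n => l + ε n) Filter.atTop (nhds (l + 0)) :=
        tendsto_const_nhds.add hεtendsto
      have h4 : ∀ᶠ n in Filter.atTop, l + ε n < t :=
        h3.eventually (gt_mem_nhds (by simpa using ht1))
      filter_upwards [h4] with n hn
      exact lt_of_le_of_lt (hz1 n) hn
    obtain ⟨n, hn1, hn2⟩ := (h1.and h2).exists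
    linarith
  exact ⟨y, fun w => le_trans hFy (hlle w)⟩
end

section
/- Let (X,d) be a complete CAT(0) space and f : X → ℝ a lower semi-continuous λ-convex function with λ < 0. Then for every x ∈ X and 0 < τ < (−λ)⁻¹, the set of minimizers of z ↦ f(z) + d²(x,z)/(2τ) consists of exactly one point. -/
/-- Arithmetic core of the coercivity estimate. -/
lemma resolvent_aux_coercive (fx fy fp lam c D s δ : ℝ) (hκ : 0 < lam + 2*c)
    (hD : 0 < D) (hδ : 0 < δ) (hs : s = δ/(2*D+2*δ))
    (h1 : fx - 1 < fp + (s*D)^2*c)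
    (h2 : fp ≤ (1-s)*fx + s*fy - lam/2*(1-s)*s*D^2) :
    fx - 2 - 4/((lam+2*c)*δ^2) ≤ fy + D^2*c := by
  have hden : (0:ℝ) < 2*D+2*δ := by linarith
  have hκδ : 0 < (lam+2*c)*δ^2 := by positivity
  set e := 4/((lam+2*c)*δ^2) with he
  have h4 : e * ((lam+2*c)*δ^2) = 4 := div_mul_cancel₀ _ hκδ.ne'
  have he0 : 0 < e := by positivity
  have hsδ : s * (2*D+2*δ) = δ := by rw [hs]; field_simp
  have hs0 : 0 < s := by rw [hs]; positivity
  have hs_half : s ≤ 1/2 := by rw [hs, div_le_iff₀ hden]; linarith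
  have hA : s*fx - 1 + lam/2*(1-s)*s*D^2 - s^2*D^2*c < s*fy := by nlinarith [h1, h2]
  have hAM : 2*D ≤ (lam+2*c)*δ*D^2/4 + e*δ := by
    nlinarith [sq_nonneg ((lam+2*c)*δ*D - 4), h4, mul_pos hκ hδ, sq_nonneg δ]
  have h5 : s*(2*D) ≤ s*((lam+2*c)*δ*D^2/4 + e*δ) := mul_le_mul_of_nonneg_left hAM hs0.le
  have h6 : 0 ≤ s*(1/2 - s)*((lam+2*c)*δ)*D^2 := by
    apply mul_nonneg
    apply mul_nonneg
    exact mul_nonneg hs0.le (by linarith)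
    exact mul_nonneg hκ.le hδ.le
    exact sq_nonneg D
  have hB : 1 ≤ s*((1-s)*(lam+2*c)/2*D^2 + 2 + e) := by
    nlinarith [h5, h6, hsδ, hδ]
  nlinarith [hA, hB, hs0]

set_option maxHeartbeats 1000000

/-- In a complete CAT(0) space, for a lower semi-continuous `λ`-convex function with
`λ < 0` and `0 < τ < (−λ)⁻¹`, the Moreau–Yosida resolvent `J^f_τ(x)` is a singleton. -/
theorem resolvent_unique_of_lambda_convex
    {X : Type*} [MetricSpace X] [CompleteSpace X]
    (γ : X → X → ℝ → X)
    (hγ0 : ∀ x y, γ x y 0 = x) (hγ1 : ∀ x y, γ x y 1 = y)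
    (hgeo : ∀ x y, ∀ s ∈ Set.Icc (0:ℝ) 1, ∀ t ∈ Set.Icc (0:ℝ) 1,
      dist (γ x y s) (γ x y t) = |s - t| * dist x y)
    (hcat : ∀ x y z, ∀ s ∈ Set.Icc (0:ℝ) 1,
      dist x (γ y z s) ^ 2 ≤
        (1 - s) * dist x y ^ 2 + s * dist x z ^ 2 - (1 - s) * s * dist y z ^ 2)
    (f : X → ℝ) (hlsc : LowerSemicontinuous f)
    (lam : ℝ) (hlam : lam < 0)
    (hconv : ∀ x y, ∀ s ∈ Set.Ioo (0:ℝ) 1,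
      f (γ x y s) ≤ (1 - s) * f x + s * f y - lam / 2 * (1 - s) * s * dist x y ^ 2)
    (x : X) (τ : ℝ) (hτ : 0 < τ) (hτ' : τ < (-lam)⁻¹) :
    ∃! z : X, ∀ w : X, f z + dist x z ^ 2 / (2 * τ) ≤ f w + dist x w ^ 2 / (2 * τ) := by
  classical
  have h2τ : (0:ℝ) < 2*τ := by linarith
  obtain ⟨c, hc_def⟩ : ∃ c : ℝ, c = (2*τ)⁻¹ := ⟨_, rfl⟩
  have hc : 0 < c := by rw [hc_def]; positivity
  have hdiv : ∀ a : ℝ, a / (2*τ) = a * c := by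
    intro a; rw [hc_def, div_eq_mul_inv]
  simp only [hdiv]
  -- κ := lam + 2c > 0
  have hκ : 0 < lam + 2*c := by
    have hnl : 0 < -lam := by linarith
    have h1 : τ * (-lam) < 1 := by
      calc τ * (-lam) < (-lam)⁻¹ * (-lam) := mul_lt_mul_of_pos_right hτ' hnl
        _ = 1 := inv_mul_cancel₀ hnl.ne'
    have h2 : (2*τ) * c = 1 := by rw [hc_def]; exact mul_inv_cancel₀ h2τ.ne'
    nlinarith [h1, h2, hτ, hc]
  obtain ⟨F, hF⟩ : ∃ F : X → ℝ, F = fun z => f z + dist x z ^ 2 * c := ⟨_, rfl⟩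
  have hFlsc : LowerSemicontinuous F := by
    rw [hF]
    exact hlsc.add (Continuous.lowerSemicontinuous (by fun_prop))
  have hFx : F x = f x := by simp [hF]
  -- midpoint inequality
  have hmid : ∀ y z : X, F (γ y z (1/2)) ≤ (F y + F z)/2 - (lam + 2*c)/8 * dist y z ^ 2 := by
    intro y z
    have h1 := hconv y z (1/2) (by norm_num)
    have h2 := hcat x y z (1/2) (by norm_num)
    have h3 : dist x (γ y z (1/2)) ^ 2 * c ≤
        ((1-1/2) * dist x y ^ 2 + (1/2) * dist x z ^ 2 - (1-1/2)*(1/2) * dist y z ^ 2) * c :=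
      mul_le_mul_of_nonneg_right h2 hc.le
    simp only [hF]
    nlinarith [h1, h3]
  -- coercivity / lower bound
  obtain ⟨δ, hδ, hball⟩ : ∃ δ > 0, ∀ z : X, dist z x < δ → F x - 1 < F z := by
    have h := hFlsc x (F x - 1) (by linarith)
    rw [Metric.eventually_nhds_iff] at h
    obtain ⟨ε, hε, hh⟩ := h
    exact ⟨ε, hε, fun z hz => hh hz⟩
  obtain ⟨C, hCdef⟩ : ∃ C : ℝ, C = F x - 2 - 4/((lam + 2*c) * δ^2) := ⟨_, rfl⟩
  have hlow : ∀ y : X, C ≤ F y := by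
    intro y
    rcases eq_or_lt_of_le (dist_nonneg : 0 ≤ dist x y) with hD | hD
    · have hyx : y = x := by
        have h0 : dist x y = 0 := hD.symm
        rw [dist_comm] at h0
        exact dist_eq_zero.mp h0
      subst hyx
      have hpos : 0 < 4/((lam + 2*c) * δ^2) := by positivity
      rw [hCdef]; linarith
    · obtain ⟨s, hs_def⟩ : ∃ s : ℝ, s = δ/(2*dist x y + 2*δ) := ⟨_, rfl⟩
      have hden : (0:ℝ) < 2*dist x y + 2*δ := by linarith
      have hs0 : 0 < s := by rw [hs_def]; positivity
      have hs_half : s ≤ 1/2 := by rw [hs_def, div_le_iff₀ hden]; linarith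
      have hs1 : s < 1 := lt_of_le_of_lt hs_half (by norm_num)
      have hsIcc : s ∈ Set.Icc (0:ℝ) 1 := ⟨hs0.le, hs1.le⟩
      have hpx : dist (γ x y s) x = s * dist x y := by
        have h := hgeo x y s hsIcc 0 (by norm_num)
        rw [hγ0] at h
        rw [h, abs_of_nonneg (by linarith : (0:ℝ) ≤ s - 0)]
        ring_nf
      have hplt : dist (γ x y s) x < δ := by
        rw [hpx, hs_def, div_mul_eq_mul_div, div_lt_iff₀ hden]
        nlinarith
      have h1 := hball (γ x y s) hplt
      have h2 := hconv x y s ⟨hs0, hs1⟩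
      have hxp : dist x (γ x y s) = s * dist x y := by rw [dist_comm]; exact hpx
      have h1' : f x - 1 < f (γ x y s) + (s * dist x y)^2 * c := by
        have hFp : F (γ x y s) = f (γ x y s) + (s * dist x y)^2 * c := by
          simp only [hF]; rw [hxp]
        rw [hFp, hFx] at h1
        exact h1
      have hkey := resolvent_aux_coercive (f x) (f y) (f (γ x y s)) lam c (dist x y) s δ
        hκ hD hδ hs_def h1' h2
      rw [hCdef, hFx]
      have hFy : F y = f y + dist x y ^ 2 * c := by simp only [hF]
      rw [hFy]
      exact hkey
  -- infimum
  have hXne : Nonempty X := ⟨x⟩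
  have hbdd : BddBelow (Set.range F) := ⟨C, by rintro _ ⟨y, rfl⟩; exact hlow y⟩
  obtain ⟨I, hI⟩ : ∃ I : ℝ, I = ⨅ z, F z := ⟨_, rfl⟩
  have hI_le : ∀ z : X, I ≤ F z := by
    intro z; rw [hI]; exact ciInf_le hbdd z
  have hseq : ∀ n : ℕ, ∃ y : X, F y < I + 1/((n:ℝ)+1) := by
    intro n
    apply exists_lt_of_ciInf_lt
    rw [← hI]
    have : (0:ℝ) < 1/((n:ℝ)+1) := by positivity
    linarith
  choose y hy using hseq
  have hdist : ∀ n m : ℕ, (lam + 2*c)/8 * dist (y n) (y m) ^ 2 ≤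
      (1/((n:ℝ)+1) + 1/((m:ℝ)+1))/2 := by
    intro n m
    have h := hmid (y n) (y m)
    have h2 := hI_le (γ (y n) (y m) (1/2))
    have h3 := hy n
    have h4 := hy m
    linarith
  have hcauchy : CauchySeq y := by
    rw [Metric.cauchySeq_iff]
    intro ε hε
    obtain ⟨N, hN⟩ := exists_nat_gt (8/((lam + 2*c)*ε^2))
    refine ⟨N, fun m hm n hn => ?_⟩
    have hpos : 0 < (lam + 2*c)*ε^2 := by positivity
    have hNpos : (0:ℝ) < 8/((lam + 2*c)*ε^2) := by positivity
    have hm1 : (8:ℝ)/((lam + 2*c)*ε^2) < (m:ℝ)+1 := by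
      have : (N:ℝ) ≤ m := Nat.cast_le.mpr hm
      linarith
    have hn1 : (8:ℝ)/((lam + 2*c)*ε^2) < (n:ℝ)+1 := by
      have : (N:ℝ) ≤ n := Nat.cast_le.mpr hn
      linarith
    have hm2 : 1/((m:ℝ)+1) < (lam + 2*c)*ε^2/8 := by
      rw [div_lt_div_iff₀ (by positivity) (by norm_num)]
      rw [div_lt_iff₀ hpos] at hm1
      linarith
    have hn2 : 1/((n:ℝ)+1) < (lam + 2*c)*ε^2/8 := by
      rw [div_lt_div_iff₀ (by positivity) (by norm_num)]
      rw [div_lt_iff₀ hpos] at hn1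
      linarith
    have h := hdist m n
    have hsq : dist (y m) (y n) ^ 2 < ε ^ 2 := by nlinarith [h, hm2, hn2, hκ]
    exact lt_of_pow_lt_pow_left₀ 2 hε.le hsq
  obtain ⟨z, hz⟩ := cauchySeq_tendsto_of_complete hcauchy
  have hFz : F z ≤ I := by
    by_contra h
    push_neg at h
    obtain ⟨b, hb1, hb2⟩ := exists_between h
    have h1 : ∀ᶠ n in Filter.atTop, b < F (y n) := hz.eventually (hFlsc z b hb2)
    obtain ⟨M, hM⟩ := exists_nat_gt (1/(b - I))
    have h2 : ∀ᶠ n in Filter.atTop, F (y n) < b := by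
      rw [Filter.eventually_atTop]
      refine ⟨M, fun n hn => ?_⟩
      have hbI : 0 < b - I := by linarith
      have hM0 : (0:ℝ) < 1/(b-I) := by positivity
      have hMn : (1:ℝ)/(b-I) < (n:ℝ)+1 := by
        have : (M:ℝ) ≤ n := Nat.cast_le.mpr hn
        linarith
      have h5 : 1/((n:ℝ)+1) < b - I := by
        rw [div_lt_iff₀ (by positivity)]
        rw [div_lt_iff₀ hbI] at hMn
        nlinarith
      have h6 := hy n
      linarith
    obtain ⟨n, hn1, hn2⟩ := (h1.and h2).exists
    linarith
  refine ⟨z, fun w => ?_, fun w hw => ?_⟩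
  · have h := le_trans hFz (hI_le w)
    rw [hF] at h
    exact h
  · have hw' : ∀ v : X, F w ≤ F v := by rw [hF]; exact hw
    have hz' : ∀ v : X, F z ≤ F v := fun v => le_trans hFz (hI_le v)
    have h1 := hmid w z
    have h2 := hw' (γ w z (1/2))
    have h3 := hw' z
    have h4 := hz' w
    have hd : dist w z ^ 2 ≤ 0 := by nlinarith [hκ]
    have h0 : dist w z = 0 := by
      nlinarith [dist_nonneg (x := w) (y := z), sq_nonneg (dist w z)]
    exact dist_eq_zero.mp h0
end

section
/- Let (X,d) be a complete CAT(0) space, f : X → ℝ lower semi-continuous and quasi-convex, and (x_k)_{k≥0} a discrete-time gradient curve, i.e., x_k minimizes z ↦ f(z) + d²(x_{k−1},z)/(2τ_k) for each k ≥ 1 (with τ_k > 0). Then the sequence is self-contracted: d(x_l, x_m) ≤ d(x_k, x_m) for all 0 ≤ k < l < m. -/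
/-- Discrete-time gradient curves (proximal sequences) of a lower semi-continuous
quasi-convex function on a complete CAT(0) space are self-contracted:
`d(x_l, x_m) ≤ d(x_k, x_m)` for `k < l < m`. -/
theorem discrete_gradient_curve_selfContracted
    {X : Type*} [MetricSpace X] [CompleteSpace X]
    (γ : X → X → ℝ → X)
    (hγ0 : ∀ x y, γ x y 0 = x) (hγ1 : ∀ x y, γ x y 1 = y)
    (hgeo : ∀ x y, ∀ s ∈ Set.Icc (0:ℝ) 1, ∀ t ∈ Set.Icc (0:ℝ) 1,
      dist (γ x y s) (γ x y t) = |s - t| * dist x y)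
    (hcat : ∀ x y z, ∀ s ∈ Set.Icc (0:ℝ) 1,
      dist x (γ y z s) ^ 2 ≤
        (1 - s) * dist x y ^ 2 + s * dist x z ^ 2 - (1 - s) * s * dist y z ^ 2)
    (f : X → ℝ) (hlsc : LowerSemicontinuous f)
    (hqc : ∀ x y, ∀ s ∈ Set.Ioo (0:ℝ) 1, f (γ x y s) ≤ max (f x) (f y))
    (x : ℕ → X) (τ : ℕ → ℝ) (hτ : ∀ k, 0 < τ k)
    (hmin : ∀ k : ℕ, ∀ z : X,
      f (x (k + 1)) + dist (x k) (x (k + 1)) ^ 2 / (2 * τ (k + 1)) ≤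
        f z + dist (x k) z ^ 2 / (2 * τ (k + 1))) :
    ∀ k l m : ℕ, k < l → l < m → dist (x l) (x m) ≤ dist (x k) (x m) := by
  -- f is nonincreasing along the sequence
  have hdec : ∀ n, f (x (n + 1)) ≤ f (x n) := by
    intro n
    have h := hmin n (x n)
    have hw : 0 < 2 * τ (n + 1) := by have := hτ (n + 1); linarith
    have h0 : (0:ℝ) ≤ dist (x n) (x (n + 1)) ^ 2 / (2 * τ (n + 1)) :=
      div_nonneg (by positivity) (le_of_lt hw)
    simp only [dist_self] at h
    have : (0:ℝ) ^ 2 / (2 * τ (n + 1)) = 0 := by simp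
    rw [this] at h
    linarith
  have hmono : ∀ a b : ℕ, a ≤ b → f (x b) ≤ f (x a) := by
    intro a b hab
    induction hab with
    | refl => exact le_refl _
    | step h ih => exact le_trans (hdec _) ih
  -- one-step contraction
  have hstep : ∀ k m : ℕ, k + 1 ≤ m → dist (x (k + 1)) (x m) ≤ dist (x k) (x m) := by
    intro k m hkm
    set A := dist (x (k + 1)) (x m) with hA
    set B := dist (x k) (x m) with hB
    set C := dist (x k) (x (k + 1)) with hC
    have key : ∀ s ∈ Set.Ioo (0:ℝ) 1, (1 - s) * A ^ 2 ≤ B ^ 2 := by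
      intro s hs
      set z := γ (x (k + 1)) (x m) s with hz
      have h2 : f z ≤ f (x (k + 1)) := by
        have hq := hqc (x (k + 1)) (x m) s hs
        have hm := hmono (k + 1) m hkm
        rwa [max_eq_left hm] at hq
      have hw : 0 < 2 * τ (k + 1) := by have := hτ (k + 1); linarith
      have h3 : C ^ 2 ≤ dist (x k) z ^ 2 := by
        have h1 := hmin k z
        have hdiv : C ^ 2 / (2 * τ (k + 1)) ≤ dist (x k) z ^ 2 / (2 * τ (k + 1)) := by
          linarith
        exact (div_le_div_iff_of_pos_right hw).mp hdiv
      have h4 := hcat (x k) (x (k + 1)) (x m) s ⟨le_of_lt hs.1, le_of_lt hs.2⟩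
      have hC2 : (0:ℝ) ≤ C ^ 2 := sq_nonneg _
      nlinarith [hs.1, hs.2, h3, h4]
    have hAB : A ^ 2 ≤ B ^ 2 := by
      by_contra h
      push_neg at h
      have hB2 : (0:ℝ) ≤ B ^ 2 := sq_nonneg _
      have hA2 : 0 < A ^ 2 := lt_of_le_of_lt hB2 h
      set s := (A ^ 2 - B ^ 2) / (2 * A ^ 2) with hsdef
      have hs : s ∈ Set.Ioo (0:ℝ) 1 := by
        constructor
        · exact div_pos (by linarith) (by linarith)
        · rw [div_lt_one (by linarith)]; nlinarith
      have hkey := key s hs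
      have heq : (1 - s) * A ^ 2 = (A ^ 2 + B ^ 2) / 2 := by
        have hA0 : A ≠ 0 := fun h0 => by rw [h0] at hA2; norm_num at hA2
        rw [hsdef]; field_simp; ring
      rw [heq] at hkey
      linarith
    nlinarith [dist_nonneg (x := x (k + 1)) (y := x m), dist_nonneg (x := x k) (y := x m)]
  intro k l m hkl hlm
  have main : ∀ j : ℕ, k ≤ j → j ≤ m → dist (x j) (x m) ≤ dist (x k) (x m) := by
    intro j hkj
    induction hkj with
    | refl => intro _; exact le_refl _
    | step h ih =>
      intro hjm
      exact le_trans (hstep _ _ hjm) (ih (le_trans (Nat.le_succ _) hjm))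
  exact main l hkl.le hlm.le
end

section
/- Let ξ : [0,ℓ) → T be a self-contracted curve in a metric tree (an ℝ-tree). If ξ is continuous, then its image is contained in a geodesic segment (is isometric to an interval). -/
open Set Filter Topology

lemma tree_exists_eq_of_between {X : Type*} [MetricSpace X]
    (htree : ∀ x y z w : X,
      dist x y + dist z w ≤ max (dist x z + dist y w) (dist x w + dist y z))
    {c : ℝ → X} {α β : ℝ} (hαβ : α ≤ β)
    (hc : ContinuousOn c (Set.Icc α β)) {b : X}
    (hb : dist (c α) b + dist b (c β) = dist (c α) (c β)) :
    ∃ u ∈ Set.Icc α β, c u = b := by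
  set q : ℝ → ℝ := fun u => (dist (c α) (c u) + dist (c α) (c β) - dist (c u) (c β)) / 2
    with hqdef
  have hqc : ContinuousOn q (Icc α β) := by
    apply ContinuousOn.div_const
    apply ContinuousOn.sub
    · exact (((continuous_const.dist continuous_id).comp_continuousOn hc).add continuousOn_const)
    · exact ((continuous_id.dist continuous_const).comp_continuousOn hc)
  have hr0 : (0:ℝ) ≤ dist (c α) b := dist_nonneg
  have hrL : dist (c α) b ≤ dist (c α) (c β) := by
    have := dist_nonneg (x := b) (y := c β); linarith
  set S := {u : ℝ | u ∈ Icc α β ∧ q u ≤ dist (c α) b} with hSdef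
  have hαS : α ∈ S := by
    refine ⟨⟨le_rfl, hαβ⟩, ?_⟩
    have hq : q α = 0 := by simp [hqdef, dist_self]
    rw [hq]; exact hr0
  have hSbdd : BddAbove S := ⟨β, fun u hu => hu.1.2⟩
  have hSclosed : IsClosed S := by
    have : S = Icc α β ∩ q ⁻¹' (Iic (dist (c α) b)) := rfl
    rw [this]
    exact hqc.preimage_isClosed_of_isClosed isClosed_Icc isClosed_Iic
  set u₁ := sSup S with hu₁def
  have hu₁S : u₁ ∈ S := hSclosed.csSup_mem ⟨α, hαS⟩ hSbdd
  have hu₁Icc : u₁ ∈ Icc α β := hu₁S.1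
  have hub : ∀ u ∈ S, u ≤ u₁ := fun u hu => le_csSup hSbdd hu
  -- filter trick for u₁ < β
  have hfilter : u₁ < β → (𝓝[Ioc u₁ β] u₁).NeBot := by
    intro h
    rw [← mem_closure_iff_nhdsWithin_neBot, closure_Ioc (ne_of_lt h)]
    exact ⟨le_rfl, le_of_lt h⟩
  have hmonofil : 𝓝[Ioc u₁ β] u₁ ≤ 𝓝[Icc α β] u₁ :=
    nhdsWithin_mono _ (fun u hu => ⟨hu₁Icc.1.trans hu.1.le, hu.2⟩)
  have hqu₁ : q u₁ = dist (c α) b := by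
    rcases lt_or_eq_of_le hu₁Icc.2 with hlt | heq
    · by_contra hne
      have hqlt : q u₁ < dist (c α) b := lt_of_le_of_ne hu₁S.2 hne
      haveI := hfilter hlt
      have hev : ∀ᶠ u in 𝓝[Icc α β] u₁, q u < dist (c α) b :=
        (hqc u₁ hu₁Icc).eventually (eventually_lt_nhds hqlt)
      obtain ⟨u, hqu, huIoc⟩ :=
        ((hev.filter_mono hmonofil).and eventually_mem_nhdsWithin).exists
      have : u ∈ S := ⟨⟨hu₁Icc.1.trans huIoc.1.le, huIoc.2⟩, hqu.le⟩
      exact absurd (hub u this) (not_le.mpr huIoc.1)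
    · have : q β = dist (c α) (c β) := by
        simp [hqdef, dist_self]
      rw [heq] at hu₁S ⊢
      rw [this]
      have := hu₁S.2
      rw [‹q β = dist (c α) (c β)›] at this
      linarith
  -- now show c u₁ has zero excess: dist (c α) (c u₁) + dist (c u₁) (c β) = dist (c α) (c β)
  have hez : dist (c α) (c u₁) + dist (c u₁) (c β) ≤ dist (c α) (c β) := by
    by_contra hlt
    push_neg at hlt
    set ez := (dist (c α) (c u₁) + dist (c u₁) (c β) - dist (c α) (c β)) / 2 with hezdef
    have hezpos : 0 < ez := by rw [hezdef]; linarith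
    have hu₁β : u₁ < β := by
      rcases lt_or_eq_of_le hu₁Icc.2 with h | h
      · exact h
      · exfalso
        rw [h] at hlt
        simp [dist_self] at hlt
    haveI := hfilter hu₁β
    have hcw : ContinuousWithinAt c (Icc α β) u₁ := hc u₁ hu₁Icc
    have hd0 : Tendsto (fun u => dist (c u) (c u₁)) (𝓝[Icc α β] u₁) (𝓝 0) := by
      have := hcw.dist (continuousWithinAt_const (b := c u₁))
      simpa [dist_self] using this
    have hev : ∀ᶠ u in 𝓝[Icc α β] u₁, dist (c u) (c u₁) < ez :=
      hd0.eventually (eventually_lt_nhds hezpos)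
    obtain ⟨u, hdu, huIoc⟩ :=
      ((hev.filter_mono hmonofil).and eventually_mem_nhdsWithin).exists
    have huIcc : u ∈ Icc α β := ⟨hu₁Icc.1.trans huIoc.1.le, huIoc.2⟩
    have hqgt : dist (c α) b < q u := by
      by_contra hle
      push_neg at hle
      exact absurd (hub u ⟨huIcc, hle⟩) (not_le.mpr huIoc.1)
    -- four point inequality on (c α), (c u), (c β), (c u₁)
    have h4 := htree (c α) (c u) (c β) (c u₁)
    have htri : dist (c α) (c β) ≤ dist (c α) (c u) + dist (c u) (c β) :=
      dist_triangle _ _ _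
    have hquval : (dist (c α) (c u) + dist (c α) (c β) - dist (c u) (c β)) / 2 = q u := rfl
    have hqu₁val : (dist (c α) (c u₁) + dist (c α) (c β) - dist (c u₁) (c β)) / 2 = q u₁ := rfl
    rw [hqu₁] at hqu₁val
    rw [dist_comm (c β) (c u₁)] at h4
    rcases le_max_iff.mp h4 with h | h
    · linarith
    · linarith
  have hforward : dist (c α) (c β) ≤ dist (c α) (c u₁) + dist (c u₁) (c β) :=
    dist_triangle _ _ _
  have heq : dist (c α) (c u₁) + dist (c u₁) (c β) = dist (c α) (c β) :=
    le_antisymm hez hforward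
  -- from q u₁ = dist (c α) b and heq : dist (c α) (c u₁) = dist (c α) b etc.
  have hC : dist (c α) (c u₁) = dist (c α) b := by
    have hqu₁val : (dist (c α) (c u₁) + dist (c α) (c β) - dist (c u₁) (c β)) / 2 = q u₁ := rfl
    rw [hqu₁] at hqu₁val
    linarith
  have hD : dist (c u₁) (c β) = dist b (c β) := by linarith
  refine ⟨u₁, hu₁Icc, ?_⟩
  have h5 := htree (c u₁) b (c α) (c β)
  rw [dist_comm (c u₁) (c α), dist_comm b (c α)] at h5
  have : dist (c u₁) b ≤ 0 := by
    rcases le_max_iff.mp h5 with h | h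
    · linarith
    · linarith
  exact dist_le_zero.mp this


/-- In an ℝ-tree (a geodesic, 0-hyperbolic metric space), the image of a continuous
self-contracted curve is isometric to an interval of the real line. -/
theorem selfContracted_tree_image_interval
    {X : Type*} [MetricSpace X]
    (γ : X → X → ℝ → X)
    (hγ0 : ∀ x y, γ x y 0 = x) (hγ1 : ∀ x y, γ x y 1 = y)
    (hgeo : ∀ x y, ∀ s ∈ Set.Icc (0:ℝ) 1, ∀ t ∈ Set.Icc (0:ℝ) 1,
      dist (γ x y s) (γ x y t) = |s - t| * dist x y)
    (htree : ∀ x y z w : X,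
      dist x y + dist z w ≤ max (dist x z + dist y w) (dist x w + dist y z))
    {ℓ : ℝ} (ξ : ℝ → X)
    (hsc : ∀ t₁ t₂ t₃ : ℝ, 0 ≤ t₁ → t₁ ≤ t₂ → t₂ ≤ t₃ → t₃ < ℓ →
      dist (ξ t₂) (ξ t₃) ≤ dist (ξ t₁) (ξ t₃))
    (hcont : ContinuousOn ξ (Set.Ico 0 ℓ)) :
    ∃ I : Set ℝ, I.OrdConnected ∧
      ∃ φ : I → X, Isometry φ ∧ Set.range φ = ξ '' Set.Ico 0 ℓ := by
  classical
  -- key colinearity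
  have key : ∀ s t : ℝ, 0 ≤ s → s ≤ t → t < ℓ →
      dist (ξ 0) (ξ s) + dist (ξ s) (ξ t) = dist (ξ 0) (ξ t) := by
    intro s t hs hst htl
    have htri : dist (ξ 0) (ξ t) ≤ dist (ξ 0) (ξ s) + dist (ξ s) (ξ t) :=
      dist_triangle _ _ _
    by_contra hne
    have hgt : dist (ξ 0) (ξ t) < dist (ξ 0) (ξ s) + dist (ξ s) (ξ t) :=
      lt_of_le_of_ne htri (Ne.symm hne)
    have hL0 : 0 < dist (ξ 0) (ξ s) := by
      rcases (dist_nonneg (x := ξ 0) (y := ξ s)).lt_or_eq with h | h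
      · exact h
      · exfalso
        have hxs : ξ 0 = ξ s := dist_eq_zero.mp h.symm
        rw [← hxs, dist_self] at hgt
        linarith
    set L := dist (ξ 0) (ξ s) with hLdef
    set d := dist (ξ 0) (ξ t) with hddef
    set Ds := dist (ξ s) (ξ t) with hDsdef
    have htri2 : Ds ≤ L + d := by
      rw [hLdef, hddef, hDsdef, dist_comm (ξ 0) (ξ s)]
      exact dist_triangle _ _ _
    set r := (L + d - Ds) / 2 with hrdef
    have hr0 : 0 ≤ r := by rw [hrdef]; linarith
    have hrL : r ≤ L := by rw [hrdef]; linarith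
    set b := γ (ξ 0) (ξ s) (r / L) with hbdef
    have hmem : r / L ∈ Set.Icc (0:ℝ) 1 :=
      ⟨div_nonneg hr0 hL0.le, (div_le_one hL0).mpr hrL⟩
    have hxb : dist (ξ 0) b = r := by
      have h0 := hgeo (ξ 0) (ξ s) 0 ⟨le_refl _, zero_le_one⟩ (r / L) hmem
      rw [hγ0] at h0
      rw [hbdef, h0, ← hLdef]
      rw [abs_of_nonpos (by linarith [hmem.1])]
      field_simp
      ring
    have hby : dist b (ξ s) = L - r := by
      have h1 := hgeo (ξ 0) (ξ s) (r / L) hmem 1 ⟨zero_le_one, le_refl _⟩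
      rw [hγ1] at h1
      rw [hbdef, h1, ← hLdef]
      rw [abs_of_nonpos (by linarith [hmem.2])]
      field_simp
      ring
    obtain ⟨u, huIcc, hub⟩ := tree_exists_eq_of_between htree hs
      (hcont.mono (fun v hv => ⟨hv.1, lt_of_le_of_lt hv.2 (lt_of_le_of_lt hst htl)⟩)) (b := b)
      (by rw [hxb, hby]; ring)
    -- bound dist b (ξ t)
    have h5 := htree b (ξ t) (ξ 0) (ξ s)
    rw [dist_comm b (ξ 0)] at h5
    have hbt : dist b (ξ t) ≤ (d + Ds - L) / 2 := by
      rw [hxb] at h5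
      rw [hby] at h5
      rw [dist_comm (ξ t) (ξ s), ← hDsdef] at h5
      rw [dist_comm (ξ t) (ξ 0), ← hddef] at h5
      rw [← hLdef] at h5
      rcases le_max_iff.mp h5 with h | h
      · linarith
      · linarith
    have hmono := hsc u s t huIcc.1 huIcc.2 hst htl
    rw [hub] at hmono
    rw [← hDsdef] at hmono
    linarith
  -- distances along the curve are differences of f
  set f : ℝ → ℝ := fun u => dist (ξ 0) (ξ u) with hfdef
  have key2 : ∀ s ∈ Set.Ico 0 ℓ, ∀ t ∈ Set.Ico 0 ℓ,
      dist (ξ s) (ξ t) = |f s - f t| := by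
    intro s hs t ht
    rcases le_total s t with h | h
    · have hk := key s t hs.1 h ht.2
      rw [abs_of_nonpos (by simp only [hfdef]; linarith [dist_nonneg (x := ξ s) (y := ξ t)])]
      simp only [hfdef]
      linarith
    · have hk := key t s ht.1 h hs.2
      rw [dist_comm (ξ s) (ξ t)]
      rw [abs_of_nonneg (by simp only [hfdef]; linarith [dist_nonneg (x := ξ t) (y := ξ s)])]
      simp only [hfdef]
      linarith
  have hfc : ContinuousOn f (Set.Ico 0 ℓ) :=
    (continuous_const.dist continuous_id).comp_continuousOn hcont
  refine ⟨f '' Set.Ico 0 ℓ, ?_, ?_⟩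
  · constructor
    rintro r₁ ⟨s₁, hs₁, rfl⟩ r₂ ⟨s₂, hs₂, rfl⟩ r hr
    rcases le_total s₁ s₂ with h | h
    · have hsub : Set.Icc s₁ s₂ ⊆ Set.Ico 0 ℓ :=
        fun v hv => ⟨hs₁.1.trans hv.1, lt_of_le_of_lt hv.2 hs₂.2⟩
      have hiv := intermediate_value_Icc h (hfc.mono hsub)
      exact (Set.image_mono (f := f) hsub) (hiv hr)
    · have hk := key s₂ s₁ hs₂.1 h hs₁.2
      have hle : f s₂ ≤ f s₁ := by
        simp only [hfdef]; linarith [dist_nonneg (x := ξ s₂) (y := ξ s₁)]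
      have : r = f s₁ := le_antisymm (hr.2.trans hle) hr.1
      exact this ▸ ⟨s₁, hs₁, rfl⟩
  · choose g hg1 hg2 using fun r : ↥(f '' Set.Ico 0 ℓ) =>
      (Set.mem_image f _ _).mp r.2
    refine ⟨fun r => ξ (g r), ?_, ?_⟩
    · apply Isometry.of_dist_eq
      intro r r'
      rw [key2 _ (hg1 r) _ (hg1 r'), hg2 r, hg2 r', Subtype.dist_eq, Real.dist_eq]
    · ext z
      simp only [Set.mem_range, Set.mem_image]
      constructor
      · rintro ⟨r, rfl⟩
        exact ⟨g r, hg1 r, rfl⟩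
      · rintro ⟨u, hu, rfl⟩
        refine ⟨⟨f u, ⟨u, hu, rfl⟩⟩, ?_⟩
        have h1 := hg2 ⟨f u, ⟨u, hu, rfl⟩⟩
        have h2 := key2 _ (hg1 ⟨f u, ⟨u, hu, rfl⟩⟩) u hu
        rw [h1] at h2
        simp only [sub_self, abs_zero] at h2
        exact dist_eq_zero.mp h2
end

section
/- Let X be the k-spider (k copies of [0,1] glued at 0 with the length metric) and define ξ : [0,k) → X by letting ξ(t) be the endpoint 1 of the i-th leg for t ∈ [i−1, i). Then ξ is self-contracted and L(ξ) = 2(k−1). -/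
/-- Distance on the `k`-spider (`k` copies of `[0,1]` glued at `0` with the length
metric): points on the same leg are at the usual distance, points on different legs at
the sum of their distances to the center. -/
noncomputable def spiderDist {k : ℕ} (p q : Fin k × ℝ) : ℝ :=
  if p.1 = q.1 then |p.2 - q.2| else p.2 + q.2

/-- The discontinuous curve `ξ : [0,k) → X` on the `k`-spider, equal to the endpoint `1`
of the `i`-th leg for `t ∈ [i−1, i)`, is self-contracted and has length `2(k−1)`. -/
theorem spider_curve_selfContracted_length
    (k : ℕ) (hk : 0 < k) (ξ : ℝ → Fin k × ℝ)
    (hξ : ∀ t : ℝ, ξ t = (⟨⌊t⌋₊ % k, Nat.mod_lt _ hk⟩, (1 : ℝ))) :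
    (∀ t₁ t₂ t₃ : ℝ, 0 ≤ t₁ → t₁ ≤ t₂ → t₂ ≤ t₃ → t₃ < (k : ℝ) →
      spiderDist (ξ t₂) (ξ t₃) ≤ spiderDist (ξ t₁) (ξ t₃)) ∧
    IsLUB {S : ℝ | ∃ (m : ℕ) (t : Fin (m + 1) → ℝ), t 0 = 0 ∧ StrictMono t ∧
        t (Fin.last m) < (k : ℝ) ∧
        S = ∑ i : Fin m, spiderDist (ξ (t i.castSucc)) (ξ (t i.succ))}
      (2 * ((k : ℝ) - 1)) := by
  have hd : ∀ a b : ℝ, spiderDist (ξ a) (ξ b)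
      = if ⌊a⌋₊ % k = ⌊b⌋₊ % k then (0:ℝ) else 2 := by
    intro a b
    rw [hξ a, hξ b]
    simp only [spiderDist, Fin.mk.injEq]
    split <;> norm_num
  constructor
  · intro t₁ t₂ t₃ h0 h12 h23 h3k
    rw [hd, hd]
    have f1 : ⌊t₁⌋₊ ≤ ⌊t₂⌋₊ := Nat.floor_le_floor h12
    have f2 : ⌊t₂⌋₊ ≤ ⌊t₃⌋₊ := Nat.floor_le_floor h23
    have f3 : ⌊t₃⌋₊ < k := (Nat.floor_lt (by linarith)).2 h3k
    have m1 : ⌊t₁⌋₊ % k = ⌊t₁⌋₊ := Nat.mod_eq_of_lt (by omega)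
    have m2 : ⌊t₂⌋₊ % k = ⌊t₂⌋₊ := Nat.mod_eq_of_lt (by omega)
    have m3 : ⌊t₃⌋₊ % k = ⌊t₃⌋₊ := Nat.mod_eq_of_lt f3
    rw [m1, m2, m3]
    by_cases h13 : ⌊t₁⌋₊ = ⌊t₃⌋₊
    · have h23' : ⌊t₂⌋₊ = ⌊t₃⌋₊ := by omega
      simp [h13, h23']
    · simp only [h13, if_neg]
      split <;> norm_num
  · have key : ∀ a b : ℝ, 0 ≤ a → a ≤ b → b < (k:ℝ) →
        spiderDist (ξ a) (ξ b) ≤ 2 * ((⌊b⌋₊ : ℝ) - (⌊a⌋₊ : ℝ)) := by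
      intro a b ha hab hbk
      rw [hd]
      have fab : ⌊a⌋₊ ≤ ⌊b⌋₊ := Nat.floor_le_floor hab
      have fb : ⌊b⌋₊ < k := (Nat.floor_lt (by linarith)).2 hbk
      have ma : ⌊a⌋₊ % k = ⌊a⌋₊ := Nat.mod_eq_of_lt (by omega)
      have mb : ⌊b⌋₊ % k = ⌊b⌋₊ := Nat.mod_eq_of_lt fb
      rw [ma, mb]
      by_cases h : ⌊a⌋₊ = ⌊b⌋₊
      · rw [if_pos h]
        have : (⌊a⌋₊ : ℝ) ≤ (⌊b⌋₊ : ℝ) := by exact_mod_cast fab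
        linarith
      · rw [if_neg h]
        have h1 : ⌊a⌋₊ + 1 ≤ ⌊b⌋₊ := by omega
        have : (⌊a⌋₊ : ℝ) + 1 ≤ (⌊b⌋₊ : ℝ) := by exact_mod_cast h1
        linarith
    apply IsGreatest.isLUB
    constructor
    · -- membership
      refine ⟨k - 1, fun i => (i.val : ℝ), by simp, ?_, ?_, ?_⟩
      · intro i j hij
        exact Nat.cast_lt.2 (Fin.lt_def.mp hij)
      · show (((Fin.last (k-1)).val : ℕ) : ℝ) < (k : ℝ)
        simp only [Fin.val_last]
        exact_mod_cast Nat.sub_lt hk one_pos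
      · have hterm : ∀ i : Fin (k-1),
            spiderDist (ξ (((i.castSucc.val : ℕ) : ℝ))) (ξ (((i.succ.val : ℕ) : ℝ))) = 2 := by
          intro i
          rw [hd]
          have hi : i.val < k - 1 := i.isLt
          have h1 : ⌊((i.castSucc.val : ℕ) : ℝ)⌋₊ = i.castSucc.val := Nat.floor_natCast _
          have h2 : ⌊((i.succ.val : ℕ) : ℝ)⌋₊ = i.succ.val := Nat.floor_natCast _
          rw [h1, h2, Fin.coe_castSucc, Fin.val_succ,
            Nat.mod_eq_of_lt (show i.val < k by omega),
            Nat.mod_eq_of_lt (show i.val + 1 < k by omega)]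
          rw [if_neg (by omega)]
        show (2 : ℝ) * ((k:ℝ) - 1)
          = ∑ i : Fin (k-1), spiderDist (ξ (((i.castSucc.val : ℕ) : ℝ)))
              (ξ (((i.succ.val : ℕ) : ℝ)))
        rw [Finset.sum_congr rfl (fun i _ => hterm i), Finset.sum_const, Finset.card_univ,
          Fintype.card_fin, nsmul_eq_mul]
        rw [Nat.cast_sub hk]
        push_cast
        ring
    · -- upper bound
      rintro S ⟨m, t, ht0, hmono, hlast, rfl⟩
      have htpos : ∀ j : Fin (m+1), 0 ≤ t j := by
        intro j
        rw [← ht0]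
        exact hmono.monotone (Fin.zero_le j)
      have htlt : ∀ j : Fin (m+1), t j < (k:ℝ) := by
        intro j
        exact lt_of_le_of_lt (hmono.monotone (Fin.le_last j)) hlast
      set F : Fin (m+1) → ℝ := fun j => (⌊t j⌋₊ : ℝ) with hF
      have hstep : ∀ i : Fin m,
          spiderDist (ξ (t i.castSucc)) (ξ (t i.succ)) ≤ 2 * (F i.succ - F i.castSucc) := by
        intro i
        exact key _ _ (htpos _) (hmono.monotone (Fin.castSucc_le_succ i)) (htlt _)
      calc ∑ i : Fin m, spiderDist (ξ (t i.castSucc)) (ξ (t i.succ))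
          ≤ ∑ i : Fin m, 2 * (F i.succ - F i.castSucc) :=
            Finset.sum_le_sum (fun i _ => hstep i)
        _ = 2 * (F (Fin.last m) - F 0) := by
            rw [← Finset.mul_sum]
            congr 1
            set v : ℕ → ℝ := fun n => if h : n < m + 1 then F ⟨n, h⟩ else 0 with hv
            have h1 : ∀ i : Fin m, F i.succ - F i.castSucc = v (i.val + 1) - v i.val := by
              intro i
              simp only [hv]
              rw [dif_pos (by omega), dif_pos (by omega)]
              congr 1
            rw [Finset.sum_congr rfl (fun i _ => h1 i),
              Fin.sum_univ_eq_sum_range (fun n => v (n+1) - v n) m,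
              Finset.sum_range_sub]
            simp only [hv]
            rw [dif_pos (by omega), dif_pos (by omega)]
            congr 1
        _ ≤ 2 * ((k:ℝ) - 1) := by
            have h0 : F 0 = 0 := by simp [hF, ht0]
            have hlt : ⌊t (Fin.last m)⌋₊ < k := (Nat.floor_lt (htpos _)).2 (htlt _)
            have h2 : (⌊t (Fin.last m)⌋₊ : ℝ) + 1 ≤ (k:ℝ) := by
              exact_mod_cast Nat.succ_le_of_lt hlt
            have hle : F (Fin.last m) ≤ (k:ℝ) - 1 := by
              simp only [hF]; linarith
            linarith
end
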